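/- For every phylogenetic tree T ∈ 𝒯_n with n ≥ 4, the number of distinct TBR operations on T that induce a non-trivial split A|B of T equals (2|A|−3)(2|B|−3) − 1 for each such split; consequently, the number of TBR operations inducing non-trivial splits is Σ [(2|A|−3)(2|B|−3) − 1], the sum over all non-trivial splits A|B of T. -/

import Mathlib

/-!
Formalization framework for unrooted binary phylogenetic trees on the
leaf set `Fin n`, encoded via their split systems (Buneman's
splits-equivalence theorem: a binary phylogenetic tree is uniquely
determined by its set of splits, which is a maximal pairwise-compatible
collection of proper bipartitions of the leaf set containing all
trivial splits).  A split `A | Aᶜ` is recorded by storing both of its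
sides.
-/

/-- Two sides (subsets of leaves) are compatible: the corresponding
splits can coexist in a tree. -/
def SidesCompatible {n : ℕ} (A B : Finset (Fin n)) : Prop :=
  A ⊆ B ∨ B ⊆ A ∨ Disjoint A B ∨ A ∪ B = Finset.univ

/-- An unrooted binary phylogenetic tree on leaf set `Fin n`,
represented by the set of sides of its splits. -/
structure PhyloTree (n : ℕ) where
  sides : Finset (Finset (Fin n))
  proper : ∀ A ∈ sides, A.Nonempty ∧ A ≠ Finset.univ
  compl_mem : ∀ A ∈ sides, Aᶜ ∈ sides
  singleton_mem : ∀ x : Fin n, {x} ∈ sides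
  compatible : ∀ A ∈ sides, ∀ B ∈ sides, SidesCompatible A B
  maximal : ∀ A : Finset (Fin n), A.Nonempty → A ≠ Finset.univ →
    (∀ B ∈ sides, SidesCompatible A B) → A ∈ sides

namespace PhyloTree

variable {n : ℕ}

/-- The split system of the restricted tree `T|X`: two trees agree on
`X` (i.e. `T|X = T'|X`) iff their restricted split systems agree. -/
def restrict (T : PhyloTree n) (X : Finset (Fin n)) : Finset (Finset (Fin n)) :=
  T.sides.image (· ∩ X)

/-- `Γ(T)`: the sum of `|A| * |B|` over all non-trivial splits `A|B` of
`T` (each unordered split is stored twice in `sides`, hence the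
division by two, which is exact). -/
def gamma (T : PhyloTree n) : ℕ :=
  (∑ A ∈ T.sides.filter (fun A => 2 ≤ A.card ∧ 2 ≤ Aᶜ.card), A.card * Aᶜ.card) / 2

/-- A tree-rearrangement move: the deleted edge of `T` (recorded as the
unordered split it induces) together with the output tree. -/
abbrev Move (n : ℕ) := Sym2 (Finset (Fin n)) × PhyloTree n

/-- The set of TBR operations on `T`: delete the edge inducing the
split `A | Aᶜ` and reconnect, obtaining a distinct tree `θ.2`.  The
defining property is that deleting the corresponding edges from `T`
and from `θ.2` yields the same forest, i.e. `A|Aᶜ` is a split of both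
trees and the two restrictions agree. -/
def OTBR (T : PhyloTree n) : Set (Move n) :=
  { θ | θ.2 ≠ T ∧ ∃ A : Finset (Fin n),
      θ.1 = Sym2.mk A Aᶜ ∧ A ∈ T.sides ∧ A ∈ θ.2.sides ∧
      T.restrict A = θ.2.restrict A ∧ T.restrict Aᶜ = θ.2.restrict Aᶜ }

/-- SPR operations: TBR operations where one component `T|A` of the
bisection (the pruned subtree) is regrafted preserving its rooting,
i.e. `T|(A ∪ {x}) = θ(T)|(A ∪ {x})` for some (equivalently every) leaf
`x` of the other side. -/
def OSPR (T : PhyloTree n) : Set (Move n) :=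
  { θ | θ ∈ T.OTBR ∧ ∃ A : Finset (Fin n), θ.1 = Sym2.mk A Aᶜ ∧
      ∃ x ∈ Aᶜ, T.restrict (insert x A) = θ.2.restrict (insert x A) }

/-- The effect on sides of swapping the pendant subtrees `T|Y` and
`T|Z` (for disjoint clusters `Y`, `Z`). -/
def swapSide (Y Z A : Finset (Fin n)) : Finset (Fin n) :=
  if Y ⊆ A ∧ Disjoint Z A then (A \ Y) ∪ Z
  else if Z ⊆ A ∧ Disjoint Y A then (A \ Z) ∪ Y
  else A

/-- NNI operations: SPR operations in which the pruned subtree `T|Y` is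
swapped with a pendant subtree `T|Z` for some cluster `Z ≠ Y` of `T`. -/
def ONNI (T : PhyloTree n) : Set (Move n) :=
  { θ | θ ∈ T.OTBR ∧ ∃ Y Z : Finset (Fin n),
      θ.1 = Sym2.mk Y Yᶜ ∧
      (∃ x ∈ Yᶜ, T.restrict (insert x Y) = θ.2.restrict (insert x Y)) ∧
      Z ∈ T.sides ∧ Z ≠ Y ∧ Disjoint Y Z ∧
      θ.2.sides = T.sides.image (swapSide Y Z) }

/-- The TBR neighbourhood `N_TBR(T) = {θ(T) : θ ∈ O_TBR(T)}`. -/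
def NTBR (T : PhyloTree n) : Set (PhyloTree n) := Prod.snd '' T.OTBR

/-- The SPR neighbourhood. -/
def NSPR (T : PhyloTree n) : Set (PhyloTree n) := Prod.snd '' T.OSPR

/-- The NNI neighbourhood. -/
def NNNI (T : PhyloTree n) : Set (PhyloTree n) := Prod.snd '' T.ONNI

/-- A caterpillar: every internal vertex (equivalently, every
tripartition of the leaves into three clusters) is adjacent to a
leaf. -/
def IsCaterpillar (T : PhyloTree n) : Prop :=
  ∀ A B C : Finset (Fin n), A ∈ T.sides → B ∈ T.sides → C ∈ T.sides →
    Disjoint A B → Disjoint A C → Disjoint B C → A ∪ B ∪ C = Finset.univ →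
    (A.card = 1 ∨ B.card = 1 ∨ C.card = 1)

/-- A complete (maximally balanced) tree. -/
def IsComplete (T : PhyloTree n) : Prop :=
  ∃ k : ℕ, 3 * 2 ^ k ≤ n ∧ n < 3 * 2 ^ (k + 1) ∧
    (∃ Y ∈ T.sides, Y.card = 2 ^ (k + 1)) ∧
    ∀ Y ∈ T.sides, 2 ≤ Y.card → Y.card ≤ 2 ^ (k + 1) →
      ∃ Y₁ Y₂ : Finset (Fin n), Y₁ ∈ T.sides ∧ Y₂ ∈ T.sides ∧
        Disjoint Y₁ Y₂ ∧ Y₁ ∪ Y₂ = Y ∧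
        ∃ j : ℕ, Y₁.card = 2 ^ j ∧ 2 ^ (j - 1) ≤ Y₂.card ∧ Y₂.card < 2 ^ (j + 1)

/-- The pendant subtree on the cluster `S` is perfectly balanced:
every cluster inside `S` with at least two leaves splits into two
equal-sized child clusters. -/
def PerfOn (T : PhyloTree n) (S : Finset (Fin n)) : Prop :=
  ∀ Y ∈ T.sides, Y ⊆ S → 2 ≤ Y.card →
    ∃ Y₁ Y₂ : Finset (Fin n), Y₁ ∈ T.sides ∧ Y₂ ∈ T.sides ∧
      Disjoint Y₁ Y₂ ∧ Y₁ ∪ Y₂ = Y ∧ Y₁.card = Y₂.card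

/-- A perfect tree: either `n = 2^k` and `T` is two perfectly balanced
rooted trees with `2^(k-1)` leaves joined by an edge, or
`n = 3·2^(k-1)` and `T` is three perfectly balanced rooted trees with
`2^(k-1)` leaves attached to a common vertex. -/
def IsPerfect (T : PhyloTree n) : Prop :=
  (∃ k : ℕ, n = 2 ^ k ∧ ∃ A ∈ T.sides,
      A.card = 2 ^ (k - 1) ∧ T.PerfOn A ∧ T.PerfOn Aᶜ) ∨
  (∃ k : ℕ, n = 3 * 2 ^ (k - 1) ∧ ∃ A B C : Finset (Fin n),
      A ∈ T.sides ∧ B ∈ T.sides ∧ C ∈ T.sides ∧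
      Disjoint A B ∧ Disjoint A C ∧ Disjoint B C ∧
      A ∪ B ∪ C = Finset.univ ∧
      A.card = 2 ^ (k - 1) ∧ B.card = 2 ^ (k - 1) ∧ C.card = 2 ^ (k - 1) ∧
      T.PerfOn A ∧ T.PerfOn B ∧ T.PerfOn C)

end PhyloTree


namespace PhyloTree
variable {n : ℕ}

theorem ext' {T₁ T₂ : PhyloTree n} (h : T₁.sides = T₂.sides) : T₁ = T₂ := by
  cases T₁; cases T₂; simp_all

instance : DecidableEq (PhyloTree n) := fun a b =>
  decidable_of_iff (a.sides = b.sides) ⟨ext', fun h => h ▸ rfl⟩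

/-! ### helper set lemmas -/

theorem disj_compl_of_subset {A B : Finset (Fin n)} (h : A ⊆ B) : Disjoint A Bᶜ :=
  disjoint_compl_right.mono_left h

theorem union_compl_eq_univ_of_subset {A B : Finset (Fin n)} (h : B ⊆ A) :
    A ∪ Bᶜ = Finset.univ :=
  Finset.eq_univ_iff_forall.2 fun x => by
    by_cases hx : x ∈ B
    · exact Finset.mem_union.2 (Or.inl (h hx))
    · simp [hx]

theorem subset_compl_of_disj {A B : Finset (Fin n)} (h : Disjoint A B) : A ⊆ Bᶜ :=
  fun x hx => by
    simp only [Finset.mem_compl]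
    exact fun hb => Finset.disjoint_left.1 h hx hb

theorem compl_subset_of_union {A B : Finset (Fin n)} (h : A ∪ B = Finset.univ) :
    Bᶜ ⊆ A := fun x hx => by
  have := Finset.eq_univ_iff_forall.1 h x
  simp only [Finset.mem_union] at this
  simp only [Finset.mem_compl] at hx
  tauto

theorem scompat_symm {A B : Finset (Fin n)} (h : SidesCompatible A B) :
    SidesCompatible B A := by
  rcases h with h|h|h|h
  · exact Or.inr (Or.inl h)
  · exact Or.inl h
  · exact Or.inr (Or.inr (Or.inl h.symm))
  · exact Or.inr (Or.inr (Or.inr ((Finset.union_comm B A).trans h)))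

theorem scompat_compl {A B : Finset (Fin n)} (h : SidesCompatible A B) :
    SidesCompatible A Bᶜ := by
  rcases h with h|h|h|h
  · exact Or.inr <| Or.inr <| Or.inl (disj_compl_of_subset h)
  · exact Or.inr <| Or.inr <| Or.inr (union_compl_eq_univ_of_subset h)
  · exact Or.inl (subset_compl_of_disj h)
  · exact Or.inr <| Or.inl (compl_subset_of_union h)

/-- The four relative positions of a side w.r.t. a fixed side `A`. -/
theorem side_kind {A S : Finset (Fin n)} (h : SidesCompatible S A) :
    S ⊆ A ∨ A ⊆ S ∨ S ⊆ Aᶜ ∨ Aᶜ ⊆ S := by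
  rcases h with h|h|h|h
  · exact Or.inl h
  · exact Or.inr (Or.inl h)
  · exact Or.inr <| Or.inr <| Or.inl (subset_compl_of_disj h)
  · exact Or.inr <| Or.inr <| Or.inr (compl_subset_of_union h)

variable (T : PhyloTree n)

theorem side_nonempty {A : Finset (Fin n)} (h : A ∈ T.sides) : A.Nonempty :=
  (T.proper A h).1

theorem side_ne_univ {A : Finset (Fin n)} (h : A ∈ T.sides) : A ≠ Finset.univ :=
  (T.proper A h).2

theorem compl_side_nonempty {A : Finset (Fin n)} (h : A ∈ T.sides) : Aᶜ.Nonempty :=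
  T.side_nonempty (T.compl_mem A h)

/-- The maximal-pair (children) decomposition of a side with ≥ 2 elements. -/
theorem maxpair {A : Finset (Fin n)} (hA : A ∈ T.sides) (h2 : 2 ≤ A.card) :
    ∃ Y Z : Finset (Fin n), Y ∈ T.sides ∧ Z ∈ T.sides ∧ Disjoint Y Z ∧
      Y ∪ Z = A ∧ ∀ S ∈ T.sides, S ⊆ A → S ≠ A → S ⊆ Y ∨ S ⊆ Z := by
  classical
  have hAne : A ≠ Finset.univ := T.side_ne_univ hA
  -- the set of sides strictly inside A
  set 𝒮 := T.sides.filter (fun S => S ⊂ A) with h𝒮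
  have h𝒮ne : 𝒮.Nonempty := by
    have hpos : 0 < A.card := by omega
    obtain ⟨x, hx⟩ := Finset.card_pos.1 hpos
    refine ⟨{x}, Finset.mem_filter.2 ⟨T.singleton_mem x, ?_⟩⟩
    refine Finset.ssubset_iff_of_subset (Finset.singleton_subset_iff.2 hx) |>.2 ?_
    have : 1 < A.card := by omega
    obtain ⟨y, hy, hyx⟩ := Finset.exists_mem_ne this x
    exact ⟨y, hy, by simp [hyx]⟩
  obtain ⟨Y, hYmem, hYmax⟩ := 𝒮.exists_max_image Finset.card h𝒮ne
  have hY : Y ∈ T.sides := (Finset.mem_filter.1 hYmem).1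
  have hYA : Y ⊂ A := (Finset.mem_filter.1 hYmem).2
  -- step1
  have step1 : ∀ S ∈ T.sides, S ⊂ A → S ⊆ Y ∨ Disjoint S Y := by
    intro S hS hSA
    rcases T.compatible S hS Y hY with h|h|h|h
    · exact Or.inl h
    · left
      have : S.card ≤ Y.card := hYmax S (Finset.mem_filter.2 ⟨hS, hSA⟩)
      rw [Finset.eq_of_subset_of_card_le h this]
    · exact Or.inr h
    · exfalso
      have hsub : S ∪ Y ⊆ A := Finset.union_subset hSA.1 hYA.1
      rw [h] at hsub
      exact hAne (Finset.univ_subset_iff.1 hsub)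
  -- Z := A \ Y is a side
  set Z := A \ Y with hZdef
  have hZA : Z ⊆ A := Finset.sdiff_subset
  have hZne : Z.Nonempty := by
    obtain ⟨x, hxA, hxY⟩ := Finset.exists_of_ssubset hYA
    exact ⟨x, Finset.mem_sdiff.2 ⟨hxA, hxY⟩⟩
  have hZnu : Z ≠ Finset.univ := fun h => hAne (Finset.univ_subset_iff.1 (h ▸ hZA))
  have hZ : Z ∈ T.sides := by
    apply T.maximal Z hZne hZnu
    intro S hS
    rcases side_kind (T.compatible S hS A hA) with hk|hk|hk|hk
    · rcases eq_or_ne S A with rfl|hSA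
      · exact Or.inl hZA
      · rcases step1 S hS ⟨hk, fun h' => hSA (Finset.Subset.antisymm hk h')⟩ with h|h
        · exact Or.inr <| Or.inr <| Or.inl (Finset.sdiff_disjoint.mono_right h)
        · exact scompat_symm <| Or.inl fun x hx =>
            Finset.mem_sdiff.2 ⟨hk hx, fun hxY => Finset.disjoint_left.1 h hx hxY⟩
    · exact Or.inl (hZA.trans hk)
    · exact Or.inr <| Or.inr <| Or.inl <|
        (Finset.disjoint_left.2 fun x hx hxS => by
          have := hk hxS; simp only [Finset.mem_compl] at this; exact this (hZA hx))
    · -- Aᶜ ⊆ S, i.e. Sᶜ ⊆ A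
      have hScA : Sᶜ ⊆ A := by
        intro x hx
        simp only [Finset.mem_compl] at hx
        by_contra hxA
        exact hx (hk (Finset.mem_compl.2 hxA))
      have hSc : Sᶜ ∈ T.sides := T.compl_mem S hS
      rcases eq_or_ne Sᶜ A with hceq|hcne
      · -- S = Aᶜ, Z ⊆ A disjoint from S
        refine Or.inr <| Or.inr <| Or.inl (Finset.disjoint_left.2 fun x hx hxS => ?_)
        have : x ∈ Sᶜ := hceq ▸ hZA hx
        simp only [Finset.mem_compl] at this; exact this hxS
      · rcases step1 Sᶜ hSc ⟨hScA, fun h' => hcne (Finset.Subset.antisymm hScA h')⟩ with h|h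
        · -- Sᶜ ⊆ Y hence Z ⊆ S
          refine Or.inl fun x hx => ?_
          have hxZ := Finset.mem_sdiff.1 hx
          by_contra hxS
          exact hxZ.2 (h (Finset.mem_compl.2 hxS))
        · -- Disjoint Sᶜ Y hence Z ∪ S = univ
          refine Or.inr <| Or.inr <| Or.inr (Finset.eq_univ_iff_forall.2 fun x => ?_)
          by_cases hxS : x ∈ S
          · exact Finset.mem_union.2 (Or.inr hxS)
          · have hxSc : x ∈ Sᶜ := Finset.mem_compl.2 hxS
            have hxY : x ∉ Y := fun hxY => Finset.disjoint_left.1 h hxSc hxY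
            exact Finset.mem_union.2 (Or.inl (Finset.mem_sdiff.2 ⟨hScA hxSc, hxY⟩))
  refine ⟨Y, Z, hY, hZ, Finset.disjoint_sdiff, Finset.union_sdiff_of_subset hYA.1, ?_⟩
  intro S hS hSA hSne
  rcases step1 S hS ⟨hSA, fun h' => hSne (Finset.Subset.antisymm hSA h')⟩ with h|h
  · exact Or.inl h
  · exact Or.inr fun x hx => Finset.mem_sdiff.2 ⟨hSA hx, fun hxY => Finset.disjoint_left.1 h hx hxY⟩

end PhyloTree

namespace PhyloTree
variable {n : ℕ}

/-- compatibility of two subsets of `A`, within `A`. -/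
def compatIn (A V W : Finset (Fin n)) : Prop :=
  V ⊆ W ∨ W ⊆ V ∨ Disjoint V W ∨ V ∪ W = A

/-- nontrivial elements of the restricted split system. -/
def ntR (T : PhyloTree n) (A : Finset (Fin n)) : Finset (Finset (Fin n)) :=
  (T.restrict A).filter (fun U => U ≠ ∅ ∧ U ≠ A)

variable (T : PhyloTree n)

theorem mem_restrict {A U : Finset (Fin n)} :
    U ∈ T.restrict A ↔ ∃ S ∈ T.sides, S ∩ A = U := by
  simp [restrict]

theorem restrict_sub {A U : Finset (Fin n)} (h : U ∈ T.restrict A) : U ⊆ A := by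
  obtain ⟨S, _, rfl⟩ := (T.mem_restrict).1 h
  exact Finset.inter_subset_right

theorem side_mem_restrict {A S : Finset (Fin n)} (hS : S ∈ T.sides) (hSA : S ⊆ A) :
    S ∈ T.restrict A :=
  (T.mem_restrict).2 ⟨S, hS, Finset.inter_eq_left.2 hSA⟩

theorem restrict_compl_within {A U : Finset (Fin n)} (h : U ∈ T.restrict A) :
    A \ U ∈ T.restrict A := by
  obtain ⟨S, hS, rfl⟩ := (T.mem_restrict).1 h
  refine (T.mem_restrict).2 ⟨Sᶜ, T.compl_mem S hS, ?_⟩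
  ext x
  simp only [Finset.mem_inter, Finset.mem_compl, Finset.mem_sdiff]
  tauto

theorem mem_ntR {A U : Finset (Fin n)} :
    U ∈ T.ntR A ↔ U ∈ T.restrict A ∧ U ≠ ∅ ∧ U ≠ A := by
  simp [ntR]

theorem ntR_sub {A U : Finset (Fin n)} (h : U ∈ T.ntR A) : U ⊆ A :=
  T.restrict_sub ((T.mem_ntR.1 h).1)

theorem ntR_compl_within {A U : Finset (Fin n)} (h : U ∈ T.ntR A) : A \ U ∈ T.ntR A := by
  obtain ⟨h1, h2, h3⟩ := T.mem_ntR.1 h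
  refine T.mem_ntR.2 ⟨T.restrict_compl_within h1, ?_, ?_⟩
  · intro he
    exact h3 (Finset.Subset.antisymm (T.restrict_sub h1)
      (by intro x hx; by_contra hxU; exact (Finset.notMem_empty x) (he ▸ Finset.mem_sdiff.2 ⟨hx, hxU⟩)))
  · intro he
    obtain ⟨x, hx⟩ := Finset.nonempty_iff_ne_empty.2 h2
    have hxx : x ∈ A \ U := by rw [he]; exact T.restrict_sub h1 hx
    exact (Finset.mem_sdiff.1 hxx).2 hx

theorem compatIn_of_restrict {A U V : Finset (Fin n)} (hU : U ∈ T.restrict A)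
    (hV : V ∈ T.restrict A) : compatIn A U V := by
  obtain ⟨S₁, hS₁, rfl⟩ := (T.mem_restrict).1 hU
  obtain ⟨S₂, hS₂, rfl⟩ := (T.mem_restrict).1 hV
  rcases T.compatible S₁ hS₁ S₂ hS₂ with h|h|h|h
  · exact Or.inl (fun x hx => Finset.mem_inter.2 ⟨h (Finset.mem_inter.1 hx).1, (Finset.mem_inter.1 hx).2⟩)
  · exact Or.inr <| Or.inl (fun x hx => Finset.mem_inter.2 ⟨h (Finset.mem_inter.1 hx).1, (Finset.mem_inter.1 hx).2⟩)
  · exact Or.inr <| Or.inr <| Or.inl (h.mono Finset.inter_subset_left Finset.inter_subset_left)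
  · refine Or.inr <| Or.inr <| Or.inr ?_
    rw [← Finset.union_inter_distrib_right, h, Finset.univ_inter]

/-- uniqueness of the decomposition of a side into two disjoint sides. -/
theorem pair_unique {A Y Z Y' Z' : Finset (Fin n)}
    (hY : Y ∈ T.sides) (hZ : Z ∈ T.sides) (hd : Disjoint Y Z) (hu : Y ∪ Z = A)
    (hcov : ∀ S ∈ T.sides, S ⊆ A → S ≠ A → S ⊆ Y ∨ S ⊆ Z)
    (hY' : Y' ∈ T.sides) (hZ' : Z' ∈ T.sides) (hd' : Disjoint Y' Z') (hu' : Y' ∪ Z' = A) :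
    (Y' = Y ∧ Z' = Z) ∨ (Y' = Z ∧ Z' = Y) := by
  have hYne := T.side_nonempty hY
  have hZne := T.side_nonempty hZ
  have hY'ne := T.side_nonempty hY'
  have hZ'ne := T.side_nonempty hZ'
  have hY'A : Y' ⊆ A := hu' ▸ Finset.subset_union_left
  have hZ'A : Z' ⊆ A := hu' ▸ Finset.subset_union_right
  have hY'neA : Y' ≠ A := by
    rintro rfl
    obtain ⟨x, hx⟩ := hZ'ne
    exact Finset.disjoint_right.1 hd' hx (hZ'A hx)
  have hZ'neA : Z' ≠ A := by
    rintro rfl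
    obtain ⟨x, hx⟩ := hY'ne
    exact Finset.disjoint_left.1 hd' hx (hY'A hx)
  have key : ∀ W₁ W₂ B C : Finset (Fin n), W₁ ∪ W₂ = A → B ∪ C = A →
      Disjoint B C → C.Nonempty → ¬ (W₁ ⊆ B ∧ W₂ ⊆ B) := by
    rintro W₁ W₂ B C h12 hBC hdBC ⟨x, hx⟩ ⟨hw1, hw2⟩
    have hxA : x ∈ A := hBC ▸ Finset.mem_union.2 (Or.inr hx)
    have hxB : x ∈ B := by
      rcases Finset.mem_union.1 (h12 ▸ hxA : x ∈ W₁ ∪ W₂) with h|h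
      · exact hw1 h
      · exact hw2 h
    exact Finset.disjoint_right.1 hdBC hx hxB
  have swap : ∀ U V : Finset (Fin n), U ⊆ Y → V ⊆ Z → Disjoint U V → U ∪ V = A →
      U = Y ∧ V = Z := by
    intro U V hUY hVZ hdUV huv
    constructor
    · refine Finset.Subset.antisymm hUY fun x hx => ?_
      have hxA : x ∈ A := (hu ▸ Finset.mem_union.2 (Or.inl hx))
      rcases Finset.mem_union.1 (huv ▸ hxA : x ∈ U ∪ V) with h|h
      · exact h
      · exact absurd (hVZ h) (Finset.disjoint_left.1 hd hx)
    · refine Finset.Subset.antisymm hVZ fun x hx => ?_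
      have hxA : x ∈ A := (hu ▸ Finset.mem_union.2 (Or.inr hx))
      rcases Finset.mem_union.1 (huv ▸ hxA : x ∈ U ∪ V) with h|h
      · exact absurd (hUY h) (Finset.disjoint_right.1 hd hx)
      · exact h
  rcases hcov Y' hY' hY'A hY'neA with h1|h1 <;> rcases hcov Z' hZ' hZ'A hZ'neA with h2|h2
  · exact absurd ⟨h1, h2⟩ (key Y' Z' Y Z hu' hu hd hZne)
  · exact Or.inl (swap Y' Z' h1 h2 hd' hu')
  · have := swap Z' Y' h2 h1 hd'.symm (by rwa [Finset.union_comm])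
    exact Or.inr ⟨this.2, this.1⟩
  · exact absurd ⟨h1, h2⟩ (key Y' Z' Z Y hu' (by rwa [Finset.union_comm]) hd.symm hYne)

/-- number of sides contained in a given side: `2|A| - 1`. -/
theorem card_clusters : ∀ a : ℕ, ∀ A : Finset (Fin n), A.card ≤ a → A ∈ T.sides →
    (T.sides.filter (· ⊆ A)).card = 2 * A.card - 1 := by
  intro a
  induction a with
  | zero =>
    intro A hcard hA
    exact absurd (Finset.card_eq_zero.1 (Nat.le_zero.1 hcard))
      (Finset.nonempty_iff_ne_empty.1 (T.side_nonempty hA))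
  | succ a ih =>
    intro A hcard hA
    rcases le_or_gt 2 A.card with h2 | h1
    · obtain ⟨Y, Z, hY, hZ, hd, hu, hcov⟩ := T.maxpair hA h2
      have hYA : Y ⊆ A := hu ▸ Finset.subset_union_left
      have hZA : Z ⊆ A := hu ▸ Finset.subset_union_right
      have hYne := T.side_nonempty hY
      have hZne := T.side_nonempty hZ
      have hcards : Y.card + Z.card = A.card := by
        rw [← Finset.card_union_of_disjoint hd, hu]
      have hsplit : T.sides.filter (· ⊆ A) =
          (T.sides.filter (· ⊆ Y) ∪ T.sides.filter (· ⊆ Z)) ∪ {A} := by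
        ext S
        simp only [Finset.mem_union, Finset.mem_filter, Finset.mem_singleton]
        constructor
        · rintro ⟨hS, hSA⟩
          rcases eq_or_ne S A with rfl|hne
          · exact Or.inr rfl
          · rcases hcov S hS hSA hne with h|h
            · exact Or.inl (Or.inl ⟨hS, h⟩)
            · exact Or.inl (Or.inr ⟨hS, h⟩)
        · rintro ((⟨hS, h⟩|⟨hS, h⟩)|rfl)
          · exact ⟨hS, h.trans hYA⟩
          · exact ⟨hS, h.trans hZA⟩
          · exact ⟨hA, le_refl _⟩
      have hd1 : Disjoint (T.sides.filter (· ⊆ Y)) (T.sides.filter (· ⊆ Z)) := by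
        refine Finset.disjoint_left.2 fun S hSY hSZ => ?_
        obtain ⟨x, hx⟩ := T.side_nonempty (Finset.mem_filter.1 hSY).1
        exact Finset.disjoint_left.1 hd ((Finset.mem_filter.1 hSY).2 hx)
          ((Finset.mem_filter.1 hSZ).2 hx)
      have hd2 : Disjoint (T.sides.filter (· ⊆ Y) ∪ T.sides.filter (· ⊆ Z)) {A} := by
        refine Finset.disjoint_right.2 fun S hSA hSm => ?_
        rw [Finset.mem_singleton] at hSA
        subst hSA
        rcases Finset.mem_union.1 hSm with h|h
        · obtain ⟨x, hx⟩ := hZne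
          exact Finset.disjoint_left.1 hd ((Finset.mem_filter.1 h).2 (hZA hx)) hx
        · obtain ⟨x, hx⟩ := hYne
          exact Finset.disjoint_right.1 hd ((Finset.mem_filter.1 h).2 (hYA hx)) hx
      have hYlt : Y.card < A.card := by
        have := Finset.card_pos.2 hZne
        omega
      have hZlt : Z.card < A.card := by
        have := Finset.card_pos.2 hYne
        omega
      have hY' := ih Y (by omega) hY
      have hZ' := ih Z (by omega) hZ
      rw [hsplit, Finset.card_union_of_disjoint hd2, Finset.card_union_of_disjoint hd1,
        hY', hZ', Finset.card_singleton]
      have := Finset.card_pos.2 hYne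
      have := Finset.card_pos.2 hZne
      omega
    · have h1' : A.card = 1 := by
        have := Finset.card_pos.2 (T.side_nonempty hA)
        omega
      obtain ⟨x, rfl⟩ := Finset.card_eq_one.1 h1'
      have hfe : T.sides.filter (· ⊆ ({x} : Finset (Fin n))) = {{x}} := by
        ext S
        simp only [Finset.mem_filter, Finset.mem_singleton]
        constructor
        · rintro ⟨hS, hsub⟩
          rcases Finset.subset_singleton_iff.1 hsub with rfl|h
          · exact absurd rfl (Finset.nonempty_iff_ne_empty.1 (T.side_nonempty hS))
          · exact h
        · rintro rfl
          exact ⟨T.singleton_mem x, le_refl _⟩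
      rw [hfe, h1', Finset.card_singleton]

/-- characterization of the nontrivial restricted splits. -/
theorem mem_ntR_char {A U : Finset (Fin n)} (hA : A ∈ T.sides) :
    U ∈ T.ntR A ↔ ((U ∈ T.sides ∧ U ⊂ A) ∨ ∃ W ∈ T.sides, W ⊂ A ∧ U = A \ W) := by
  constructor
  · intro h
    obtain ⟨h1, h2, h3⟩ := T.mem_ntR.1 h
    obtain ⟨S, hS, rfl⟩ := (T.mem_restrict).1 h1
    rcases side_kind (T.compatible S hS A hA) with hk|hk|hk|hk
    · left
      rw [Finset.inter_eq_left.2 hk] at h3 ⊢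
      exact ⟨hS, lt_of_le_of_ne hk h3⟩
    · rw [Finset.inter_eq_right.2 hk] at h2 h3
      exact absurd rfl h3
    · exfalso
      apply h2
      rw [Finset.eq_empty_iff_forall_notMem]
      intro x hx
      obtain ⟨hx1, hx2⟩ := Finset.mem_inter.1 hx
      exact (Finset.mem_compl.1 (hk hx1)) hx2
    · right
      refine ⟨Sᶜ, T.compl_mem S hS, ?_, ?_⟩
      · have hsub : Sᶜ ⊆ A := by
          intro y hy
          by_contra hyA
          exact (Finset.mem_compl.1 hy) (hk (Finset.mem_compl.2 hyA))
        refine lt_of_le_of_ne hsub fun he => ?_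
        apply h2
        rw [Finset.eq_empty_iff_forall_notMem]
        intro y hy
        obtain ⟨hy1, hy2⟩ := Finset.mem_inter.1 hy
        exact Finset.mem_compl.1 (he ▸ hy2 : y ∈ Sᶜ) hy1
      · ext y
        simp only [Finset.mem_inter, Finset.mem_sdiff, Finset.mem_compl]
        tauto
  · rintro (⟨hU, hUA⟩|⟨W, hW, hWA, rfl⟩)
    · refine T.mem_ntR.2 ⟨T.side_mem_restrict hU hUA.subset, ?_, hUA.ne⟩
      exact Finset.nonempty_iff_ne_empty.1 (T.side_nonempty hU)
    · refine T.mem_ntR.2 ⟨?_, ?_, ?_⟩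
      · exact T.restrict_compl_within (T.side_mem_restrict hW hWA.subset)
      · obtain ⟨x, hxA, hxW⟩ := Finset.exists_of_ssubset hWA
        exact fun he => (Finset.notMem_empty x) (he ▸ Finset.mem_sdiff.2 ⟨hxA, hxW⟩)
      · intro he
        obtain ⟨x, hx⟩ := T.side_nonempty hW
        have hxx : x ∈ A \ W := by rw [he]; exact hWA.subset hx
        exact (Finset.mem_sdiff.1 hxx).2 hx

/-- number of nontrivial restricted splits: `4|A| - 6`. -/
theorem card_ntR {A : Finset (Fin n)} (hA : A ∈ T.sides) (h2 : 2 ≤ A.card) :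
    (T.ntR A).card = 4 * A.card - 6 := by
  classical
  set C := T.sides.filter (· ⊂ A) with hC
  have hCcard : C.card = 2 * A.card - 2 := by
    have hins : T.sides.filter (· ⊆ A) = insert A C := by
      ext S
      simp only [hC, Finset.mem_insert, Finset.mem_filter]
      constructor
      · rintro ⟨hS, h⟩
        rcases eq_or_ne S A with rfl|hne
        · exact Or.inl rfl
        · exact Or.inr ⟨hS, lt_of_le_of_ne h hne⟩
      · rintro (rfl|⟨hS, h⟩)
        · exact ⟨hA, le_refl _⟩
        · exact ⟨hS, h.subset⟩
    have hAnot : A ∉ C := by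
      simp only [hC, Finset.mem_filter]
      rintro ⟨-, h⟩
      exact absurd h (lt_irrefl A)
    have h2' := T.card_clusters A.card A (le_refl _) hA
    rw [hins, Finset.card_insert_of_notMem hAnot] at h2'
    omega
  have himg : (T.ntR A) = C ∪ C.image (A \ ·) := by
    ext U
    rw [T.mem_ntR_char hA]
    simp only [hC, Finset.mem_union, Finset.mem_image, Finset.mem_filter]
    constructor
    · rintro (⟨h1, h2⟩|⟨W, hW, hWA, rfl⟩)
      · exact Or.inl ⟨h1, h2⟩
      · exact Or.inr ⟨W, ⟨hW, hWA⟩, rfl⟩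
    · rintro (⟨h1, h2⟩|⟨W, ⟨hW, hWA⟩, rfl⟩)
      · exact Or.inl ⟨h1, h2⟩
      · exact Or.inr ⟨W, hW, hWA, rfl⟩
  have hinj : Set.InjOn (A \ ·) C := by
    intro W₁ h₁ W₂ h₂ he
    have hs₁ : W₁ ⊆ A := (Finset.mem_filter.1 h₁).2.subset
    have hs₂ : W₂ ⊆ A := (Finset.mem_filter.1 h₂).2.subset
    have := congrArg (A \ ·) he
    simpa [Finset.sdiff_sdiff_eq_self hs₁, Finset.sdiff_sdiff_eq_self hs₂] using this
  have hicard : (C.image (A \ ·)).card = C.card := Finset.card_image_of_injOn hinj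
  obtain ⟨Y, Z, hY, hZ, hd, hu, hcov⟩ := T.maxpair hA h2
  have hYA : Y ⊆ A := hu ▸ Finset.subset_union_left
  have hZA : Z ⊆ A := hu ▸ Finset.subset_union_right
  have hYne := T.side_nonempty hY
  have hZne := T.side_nonempty hZ
  have hYZ : Y ≠ Z := by
    rintro rfl
    obtain ⟨x, hx⟩ := hYne
    exact Finset.disjoint_left.1 hd hx hx
  have hYsA : Y ⊂ A := by
    refine lt_of_le_of_ne hYA fun he => ?_
    obtain ⟨x, hx⟩ := hZne
    exact Finset.disjoint_right.1 hd hx (he ▸ hZA hx)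
  have hZsA : Z ⊂ A := by
    refine lt_of_le_of_ne hZA fun he => ?_
    obtain ⟨x, hx⟩ := hYne
    exact Finset.disjoint_left.1 hd hx (he ▸ hYA hx)
  have hYeq : A \ Z = Y := by
    ext x
    simp only [Finset.mem_sdiff]
    constructor
    · rintro ⟨hxA, hxZ⟩
      rcases Finset.mem_union.1 (hu ▸ hxA : x ∈ Y ∪ Z) with h|h
      · exact h
      · exact absurd h hxZ
    · intro hx
      exact ⟨hYA hx, fun hxZ => Finset.disjoint_left.1 hd hx hxZ⟩
  have hZeq : A \ Y = Z := by
    ext x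
    simp only [Finset.mem_sdiff]
    constructor
    · rintro ⟨hxA, hxY⟩
      rcases Finset.mem_union.1 (hu ▸ hxA : x ∈ Y ∪ Z) with h|h
      · exact absurd h hxY
      · exact h
    · intro hx
      exact ⟨hZA hx, fun hxY => Finset.disjoint_right.1 hd hx hxY⟩
  have hint : C ∩ C.image (A \ ·) = {Y, Z} := by
    ext U
    simp only [Finset.mem_inter, Finset.mem_image, Finset.mem_insert,
      Finset.mem_singleton, hC, Finset.mem_filter]
    constructor
    · rintro ⟨⟨hU, hUA⟩, W, hWC, rfl⟩
      obtain ⟨hW, hWA⟩ := hWC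
      have hd' : Disjoint (A \ W) W := Finset.sdiff_disjoint
      have hu' : (A \ W) ∪ W = A := Finset.sdiff_union_of_subset hWA.subset
      rcases T.pair_unique hY hZ hd hu hcov hU hW hd' hu' with ⟨h1, _⟩|⟨h1, _⟩
      · exact Or.inl h1
      · exact Or.inr h1
    · rintro (rfl|rfl)
      · exact ⟨⟨hY, hYsA⟩, Z, ⟨hZ, hZsA⟩, hYeq⟩
      · exact ⟨⟨hZ, hZsA⟩, Y, ⟨hY, hYsA⟩, hZeq⟩
  have hintcard : (C ∩ C.image (A \ ·)).card = 2 := by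
    rw [hint, Finset.card_insert_of_notMem (by simpa using hYZ), Finset.card_singleton]
  have hkey := Finset.card_union_add_card_inter C (C.image (A \ ·))
  rw [hintcard, hicard, hCcard] at hkey
  rw [himg]
  omega

end PhyloTree

namespace PhyloTree
variable {n : ℕ} (T : PhyloTree n)

theorem compatIn_compl_left {A V U : Finset (Fin n)} (hVA : V ⊆ A) (hUA : U ⊆ A)
    (h : compatIn A V (A \ U)) : compatIn A (A \ V) U := by
  rcases h with h|h|h|h
  · -- V ⊆ A \ U  ⇒  U ⊆ A \ V
    refine Or.inr <| Or.inl fun x hx => Finset.mem_sdiff.2 ⟨hUA hx, fun hxV => ?_⟩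
    exact (Finset.mem_sdiff.1 (h hxV)).2 hx
  · -- A \ U ⊆ V ⇒ A \ V ⊆ U
    refine Or.inl fun x hx => ?_
    obtain ⟨hxA, hxV⟩ := Finset.mem_sdiff.1 hx
    by_contra hxU
    exact hxV (h (Finset.mem_sdiff.2 ⟨hxA, hxU⟩))
  · -- Disjoint V (A\U) ⇒ V ⊆ U ⇒ (A \ V) ∪ U = A
    refine Or.inr <| Or.inr <| Or.inr ?_
    apply Finset.Subset.antisymm
    · exact Finset.union_subset Finset.sdiff_subset hUA
    · intro x hxA
      by_cases hxV : x ∈ V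
      · have hxU : x ∈ U := by
          by_contra hxU
          exact Finset.disjoint_left.1 h hxV (Finset.mem_sdiff.2 ⟨hVA hxV, hxU⟩)
        exact Finset.mem_union.2 (Or.inr hxU)
      · exact Finset.mem_union.2 (Or.inl (Finset.mem_sdiff.2 ⟨hxA, hxV⟩))
  · -- V ∪ (A\U) = A ⇒ Disjoint (A\V) U
    refine Or.inr <| Or.inr <| Or.inl (Finset.disjoint_left.2 fun x hx hxU => ?_)
    obtain ⟨hxA, hxV⟩ := Finset.mem_sdiff.1 hx
    have hxVU : x ∈ V ∪ (A \ U) := by rw [h]; exact hxA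
    rcases Finset.mem_union.1 hxVU with h'|h'
    · exact hxV h'
    · exact (Finset.mem_sdiff.1 h').2 hxU

theorem compat_all_compl {A V : Finset (Fin n)} (hVA : V ⊆ A)
    (hc : ∀ U ∈ T.restrict A, compatIn A V U) :
    ∀ U ∈ T.restrict A, compatIn A (A \ V) U := fun U hU =>
  compatIn_compl_left hVA (T.restrict_sub hU) (hc (A \ U) (T.restrict_compl_within hU))

/-- Maximality of the restricted split system inside a side `A`. -/
theorem restrict_max : ∀ a : ℕ, ∀ A : Finset (Fin n), A.card ≤ a → A ∈ T.sides →
    ∀ V : Finset (Fin n), V ⊆ A → V.Nonempty → V ≠ A →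
    (∀ U ∈ T.restrict A, compatIn A V U) → V ∈ T.restrict A := by
  intro a
  induction a with
  | zero =>
    intro A hcard hA
    have := Finset.card_pos.2 (T.side_nonempty hA)
    omega
  | succ a ih =>
    intro A hcard hA V hVA hVne hVneA hc
    rcases le_or_gt 2 A.card with h2 | h1
    swap
    · -- |A| = 1 : impossible
      exfalso
      have h1' : A.card = 1 := by
        have := Finset.card_pos.2 (T.side_nonempty hA)
        omega
      obtain ⟨x, rfl⟩ := Finset.card_eq_one.1 h1'
      rcases Finset.subset_singleton_iff.1 hVA with rfl|rfl
      · exact (Finset.nonempty_iff_ne_empty.1 hVne) rfl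
      · exact hVneA rfl
    obtain ⟨Y, Z, hY, hZ, hd, hu, hcov⟩ := T.maxpair hA h2
    have hYA : Y ⊆ A := hu ▸ Finset.subset_union_left
    have hZA : Z ⊆ A := hu ▸ Finset.subset_union_right
    have hYne := T.side_nonempty hY
    have hZne := T.side_nonempty hZ
    have hcards : Y.card + Z.card = A.card := by
      rw [← Finset.card_union_of_disjoint hd, hu]
    -- the main case: V inside one part of the decomposition
    have case1 : ∀ Y' Z' : Finset (Fin n), Y' ∈ T.sides → Z' ∈ T.sides →
        Disjoint Y' Z' → Y' ∪ Z' = A →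
        ∀ W : Finset (Fin n), W ⊆ Y' → W.Nonempty →
        (∀ U ∈ T.restrict A, compatIn A W U) → W ∈ T.restrict A := by
      intro Y' Z' hY' hZ' hd' hu' W hWY' hWne hcW
      have hY'A : Y' ⊆ A := hu' ▸ Finset.subset_union_left
      have hZ'ne := T.side_nonempty hZ'
      have hY'ssA : Y' ⊂ A := by
        refine lt_of_le_of_ne hY'A fun he => ?_
        obtain ⟨x, hx⟩ := hZ'ne
        exact Finset.disjoint_right.1 hd' hx
          (he ▸ (hu' ▸ Finset.subset_union_right : Z' ⊆ A) hx)
      rcases eq_or_ne W Y' with rfl|hWneY'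
      · exact T.side_mem_restrict hY' hY'A
      have hWss : W ⊂ Y' := lt_of_le_of_ne hWY' hWneY'
      have hY'2 : 2 ≤ Y'.card := by
        obtain ⟨x, hx⟩ := hWne
        obtain ⟨y, hy, hyW⟩ := Finset.exists_of_ssubset hWss
        have hxy : x ≠ y := fun he => hyW (he ▸ hx)
        have : ({x, y} : Finset (Fin n)) ⊆ Y' :=
          Finset.insert_subset (hWY' hx) (Finset.singleton_subset_iff.2 hy)
        calc 2 = ({x, y} : Finset (Fin n)).card := by
              rw [Finset.card_insert_of_notMem (by simpa using hxy), Finset.card_singleton]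
          _ ≤ Y'.card := Finset.card_le_card this
      -- W is compatible within Y' with all of restrict Y'
      have hypY : ∀ U' ∈ T.restrict Y', compatIn Y' W U' := by
        intro U' hU'
        obtain ⟨S, hS, rfl⟩ := (T.mem_restrict).1 hU'
        rcases side_kind (T.compatible S hS Y' hY') with hk|hk|hk|hk
        · -- S ⊆ Y'
          rw [Finset.inter_eq_left.2 hk]
          have hSR : S ∈ T.restrict A := T.side_mem_restrict hS (hk.trans hY'A)
          rcases hcW S hSR with h|h|h|h
          · exact Or.inl h
          · exact Or.inr (Or.inl h)
          · exact Or.inr (Or.inr (Or.inl h))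
          · exfalso
            have : A ⊆ Y' := h ▸ Finset.union_subset hWY' hk
            exact hY'ssA.not_subset this
        · -- Y' ⊆ S
          rw [Finset.inter_eq_right.2 hk]
          exact Or.inl hWY'
        · -- S ⊆ Y'ᶜ
          have : S ∩ Y' = ∅ := by
            rw [Finset.eq_empty_iff_forall_notMem]
            intro x hx
            obtain ⟨h1, h2⟩ := Finset.mem_inter.1 hx
            exact Finset.mem_compl.1 (hk h1) h2
          rw [this]
          exact Or.inr (Or.inr (Or.inl (Finset.disjoint_empty_right W)))
        · -- Y'ᶜ ⊆ S, i.e. W₀ := Sᶜ ⊆ Y'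
          have hW₀Y' : Sᶜ ⊆ Y' := by
            intro x hx
            by_contra hxY'
            exact Finset.mem_compl.1 hx (hk (Finset.mem_compl.2 hxY'))
          have hU'eq : S ∩ Y' = Y' \ Sᶜ := by
            ext x
            simp only [Finset.mem_inter, Finset.mem_sdiff, Finset.mem_compl, not_not]
            tauto
          rw [hU'eq]
          have hW₀R : Sᶜ ∈ T.restrict A :=
            T.side_mem_restrict (T.compl_mem S hS) (hW₀Y'.trans hY'A)
          rcases hcW Sᶜ hW₀R with h|h|h|h
          · -- W ⊆ Sᶜ ⇒ disjoint
            exact Or.inr <| Or.inr <| Or.inl (Finset.disjoint_left.2 fun x hx hx' =>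
              (Finset.mem_sdiff.1 hx').2 (h hx))
          · -- Sᶜ ⊆ W ⇒ union = Y'
            refine Or.inr <| Or.inr <| Or.inr (Finset.Subset.antisymm
              (Finset.union_subset hWY' Finset.sdiff_subset) fun x hx => ?_)
            by_cases hxS : x ∈ Sᶜ
            · exact Finset.mem_union.2 (Or.inl (h hxS))
            · exact Finset.mem_union.2 (Or.inr (Finset.mem_sdiff.2 ⟨hx, hxS⟩))
          · -- disjoint ⇒ W ⊆ Y' \ Sᶜ
            exact Or.inl fun x hx => Finset.mem_sdiff.2
              ⟨hWY' hx, fun hxS => Finset.disjoint_left.1 h hx hxS⟩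
          · -- W ∪ Sᶜ = A : impossible, both inside Y'
            exfalso
            have : A ⊆ Y' := h ▸ Finset.union_subset hWY' hW₀Y'
            exact hY'ssA.not_subset this
      have hWR : W ∈ T.restrict Y' := by
        refine ih Y' ?_ hY' W hWY' hWne hWneY' hypY
        have h1 := Finset.card_pos.2 hZ'ne
        have h2' : Y'.card + Z'.card = A.card := by
          rw [← Finset.card_union_of_disjoint hd', hu']
        omega
      -- transfer back to A
      have hWnt : W ∈ T.ntR Y' := T.mem_ntR.2
        ⟨hWR, Finset.nonempty_iff_ne_empty.1 hWne, hWneY'⟩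
      rcases (T.mem_ntR_char hY').1 hWnt with ⟨hWs, _⟩|⟨W₀, hW₀, hW₀ss, rfl⟩
      · exact T.side_mem_restrict hWs (hWY'.trans hY'A)
      · -- W = Y' \ W₀ with W₀ a side strictly inside Y'
        obtain ⟨P, Q, hP, hQ, hdPQ, huPQ, hcovPQ⟩ := T.maxpair hY' hY'2
        have hPY' : P ⊆ Y' := huPQ ▸ Finset.subset_union_left
        have hQY' : Q ⊆ Y' := huPQ ▸ Finset.subset_union_right
        have hQeq : Y' \ P = Q := by
          ext x
          simp only [Finset.mem_sdiff]
          constructor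
          · rintro ⟨hxA, hxP⟩
            rcases Finset.mem_union.1 (huPQ ▸ hxA : x ∈ P ∪ Q) with h|h
            · exact absurd h hxP
            · exact h
          · intro hx
            exact ⟨hQY' hx, fun hxP => Finset.disjoint_right.1 hdPQ hx hxP⟩
        have hPeq : Y' \ Q = P := by
          ext x
          simp only [Finset.mem_sdiff]
          constructor
          · rintro ⟨hxA, hxQ⟩
            rcases Finset.mem_union.1 (huPQ ▸ hxA : x ∈ P ∪ Q) with h|h
            · exact h
            · exact absurd h hxQ
          · intro hx
            exact ⟨hPY' hx, fun hxQ => Finset.disjoint_left.1 hdPQ hx hxQ⟩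
        have inner : ∀ P' Q' : Finset (Fin n), P' ∈ T.sides → Q' ∈ T.sides →
            Disjoint P' Q' → P' ∪ Q' = Y' → Y' \ P' = Q' → W₀ ⊆ P' →
            Y' \ W₀ ∈ T.restrict A := by
          intro P' Q' hP' hQ' hdPQ' huPQ' hQeq' hW₀P'
          rcases eq_or_ne W₀ P' with rfl|hne
          · rw [hQeq']
            exact T.side_mem_restrict hQ'
              ((huPQ' ▸ Finset.subset_union_right : Q' ⊆ Y').trans hY'A)
          · exfalso
            have hW₀ssP' : W₀ ⊂ P' := lt_of_le_of_ne hW₀P' hne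
            have hP'R : P' ∈ T.restrict A :=
              T.side_mem_restrict hP' ((huPQ' ▸ Finset.subset_union_left : P' ⊆ Y').trans hY'A)
            have hQ'ne := T.side_nonempty hQ'
            have hW₀ne := T.side_nonempty hW₀
            rcases hcW P' hP'R with h|h|h|h
            · -- Y' \ W₀ ⊆ P' : but Q' ⊆ Y' \ W₀
              obtain ⟨x, hx⟩ := hQ'ne
              have hxV : x ∈ Y' \ W₀ := Finset.mem_sdiff.2
                ⟨(huPQ' ▸ Finset.subset_union_right : Q' ⊆ Y') hx,
                 fun hxW => Finset.disjoint_right.1 hdPQ' hx (hW₀P' hxW)⟩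
              exact Finset.disjoint_right.1 hdPQ' hx (h hxV)
            · -- P' ⊆ Y' \ W₀ : but W₀ ⊆ P'
              obtain ⟨x, hx⟩ := hW₀ne
              exact (Finset.mem_sdiff.1 (h (hW₀P' hx))).2 hx
            · -- disjoint : but P' \ W₀ nonempty inside both
              obtain ⟨x, hx, hxW⟩ := Finset.exists_of_ssubset hW₀ssP'
              have hxV : x ∈ Y' \ W₀ := Finset.mem_sdiff.2
                ⟨(huPQ' ▸ Finset.subset_union_left : P' ⊆ Y') hx, hxW⟩
              exact Finset.disjoint_left.1 h hxV hx
            · -- union = A : but both inside Y' ⊊ A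
              have : A ⊆ Y' := h ▸ Finset.union_subset Finset.sdiff_subset
                (huPQ' ▸ Finset.subset_union_left : P' ⊆ Y')
              exact hY'ssA.not_subset this
        rcases hcovPQ W₀ hW₀ hW₀ss.subset hW₀ss.ne with h|h
        · exact inner P Q hP hQ hdPQ huPQ hQeq h
        · exact inner Q P hQ hP hdPQ.symm (by rwa [Finset.union_comm]) hPeq h
    -- now split on the relation of V with Y
    have hcovswap : ∀ S ∈ T.sides, S ⊆ A → S ≠ A → S ⊆ Z ∨ S ⊆ Y := by
      intro S hS h1 h2
      exact (hcov S hS h1 h2).symm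
    have hAVne : V ≠ ∅ := Finset.nonempty_iff_ne_empty.1 hVne
    have hAmV_ne : (A \ V).Nonempty := by
      obtain ⟨x, hx, hxV⟩ := Finset.exists_of_ssubset (lt_of_le_of_ne hVA hVneA)
      exact ⟨x, Finset.mem_sdiff.2 ⟨hx, hxV⟩⟩
    have hVrec : V = A \ (A \ V) := (Finset.sdiff_sdiff_eq_self hVA).symm
    rcases hc Y (T.side_mem_restrict hY hYA) with h|h|h|h
    · exact case1 Y Z hY hZ hd hu V h hVne hc
    · -- Y ⊆ V : A \ V ⊆ Z
      have hsub : A \ V ⊆ Z := by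
        intro x hx
        obtain ⟨hxA, hxV⟩ := Finset.mem_sdiff.1 hx
        rcases Finset.mem_union.1 (hu ▸ hxA : x ∈ Y ∪ Z) with h'|h'
        · exact absurd (h h') hxV
        · exact h'
      have := case1 Z Y hZ hY hd.symm (by rwa [Finset.union_comm]) (A \ V) hsub hAmV_ne
        (T.compat_all_compl hVA hc)
      rw [hVrec]
      exact T.restrict_compl_within this
    · -- Disjoint V Y : V ⊆ Z
      have hsub : V ⊆ Z := by
        intro x hx
        rcases Finset.mem_union.1 (hu ▸ hVA hx : x ∈ Y ∪ Z) with h'|h'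
        · exact absurd h' (Finset.disjoint_left.1 h hx)
        · exact h'
      exact case1 Z Y hZ hY hd.symm (by rwa [Finset.union_comm]) V hsub hVne hc
    · -- V ∪ Y = A : A \ V ⊆ Y
      have hsub : A \ V ⊆ Y := by
        intro x hx
        obtain ⟨hxA, hxV⟩ := Finset.mem_sdiff.1 hx
        rcases Finset.mem_union.1 (h ▸ hxA : x ∈ V ∪ Y) with h'|h'
        · exact absurd h' hxV
        · exact h'
      have := case1 Y Z hY hZ hd hu (A \ V) hsub hAmV_ne (T.compat_all_compl hVA hc)
      rw [hVrec]
      exact T.restrict_compl_within this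

end PhyloTree

namespace PhyloTree
variable {n : ℕ}

/-- sides of the reconnected tree that lie inside `A`, when the new edge is
attached at the edge `{Y, A \ Y}` of `T|A`. -/
def dSet (T : PhyloTree n) (A Y : Finset (Fin n)) : Finset (Finset (Fin n)) :=
  (T.ntR A).filter (fun W => W ⊆ Y ∨ W ⊆ A \ Y)

def lamSet (T : PhyloTree n) (A Y Z : Finset (Fin n)) : Finset (Finset (Fin n)) :=
  (dSet T A Y ∪ {A}) ∪ (dSet T Aᶜ Z ∪ {Aᶜ})

/-- the full side system of the reconnected tree. -/
def sidesF (T : PhyloTree n) (A Y Z : Finset (Fin n)) : Finset (Finset (Fin n)) :=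
  lamSet T A Y Z ∪ (lamSet T A Y Z).image compl

variable (T : PhyloTree n)

theorem mem_dSet {A Y W : Finset (Fin n)} :
    W ∈ dSet T A Y ↔ W ∈ T.ntR A ∧ (W ⊆ Y ∨ W ⊆ A \ Y) := Finset.mem_filter

theorem dSet_swap {A Y : Finset (Fin n)} (hYA : Y ⊆ A) :
    dSet T A (A \ Y) = dSet T A Y := by
  unfold dSet
  apply Finset.filter_congr
  intro W _
  rw [Finset.sdiff_sdiff_eq_self hYA]
  exact or_comm

theorem dSet_covering {A Y : Finset (Fin n)} (hY : Y ∈ T.ntR A) :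
    ∀ U ∈ T.ntR A, U ∈ dSet T A Y ∨ A \ U ∈ dSet T A Y := by
  intro U hU
  have hUA := T.ntR_sub hU
  have hYA := T.ntR_sub hY
  rcases T.compatIn_of_restrict (T.mem_ntR.1 hU).1 (T.mem_ntR.1 hY).1 with h|h|h|h
  · exact Or.inl ((T.mem_dSet).2 ⟨hU, Or.inl h⟩)
  · -- Y ⊆ U hence A \ U ⊆ A \ Y
    refine Or.inr ((T.mem_dSet).2 ⟨T.ntR_compl_within hU, Or.inr fun x hx => ?_⟩)
    obtain ⟨h1, h2⟩ := Finset.mem_sdiff.1 hx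
    exact Finset.mem_sdiff.2 ⟨h1, fun hxY => h2 (h hxY)⟩
  · -- disjoint, U ⊆ A \ Y
    exact Or.inl ((T.mem_dSet).2 ⟨hU, Or.inr fun x hx =>
      Finset.mem_sdiff.2 ⟨hUA hx, fun hxY => Finset.disjoint_left.1 h hx hxY⟩⟩)
  · -- U ∪ Y = A hence A \ U ⊆ Y
    refine Or.inr ((T.mem_dSet).2 ⟨T.ntR_compl_within hU, Or.inl fun x hx => ?_⟩)
    obtain ⟨h1, h2⟩ := Finset.mem_sdiff.1 hx
    rcases Finset.mem_union.1 (h ▸ h1 : x ∈ U ∪ Y) with h'|h'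
    · exact absurd h' h2
    · exact h'

theorem dSet_laminar {A Y : Finset (Fin n)} (hY : Y ∈ T.ntR A) :
    ∀ W₁ ∈ dSet T A Y, ∀ W₂ ∈ dSet T A Y,
      W₁ ⊆ W₂ ∨ W₂ ⊆ W₁ ∨ Disjoint W₁ W₂ := by
  intro W₁ h₁ W₂ h₂
  obtain ⟨hn₁, hp₁⟩ := (T.mem_dSet).1 h₁
  obtain ⟨hn₂, hp₂⟩ := (T.mem_dSet).1 h₂
  obtain ⟨hYr, hYne, hYneA⟩ := T.mem_ntR.1 hY
  have hYA := T.restrict_sub hYr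
  rcases T.compatIn_of_restrict (T.mem_ntR.1 hn₁).1 (T.mem_ntR.1 hn₂).1 with h|h|h|h
  · exact Or.inl h
  · exact Or.inr (Or.inl h)
  · exact Or.inr (Or.inr h)
  · -- union = A : same part is impossible, cross parts are disjoint
    have hAY : (A \ Y).Nonempty := by
      obtain ⟨x, hx, hxY⟩ := Finset.exists_of_ssubset (lt_of_le_of_ne hYA hYneA)
      exact ⟨x, Finset.mem_sdiff.2 ⟨hx, hxY⟩⟩
    have hYnee : Y.Nonempty := Finset.nonempty_iff_ne_empty.2 hYne
    have cross : ∀ V₁ V₂ : Finset (Fin n), V₁ ⊆ Y → V₂ ⊆ A \ Y → Disjoint V₁ V₂ :=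
      fun V₁ V₂ hv₁ hv₂ => Finset.disjoint_left.2 fun x hx hx' =>
        (Finset.mem_sdiff.1 (hv₂ hx')).2 (hv₁ hx)
    rcases hp₁ with hq₁|hq₁ <;> rcases hp₂ with hq₂|hq₂
    · exfalso
      obtain ⟨x, hx⟩ := hAY
      have hxu : x ∈ W₁ ∪ W₂ := by rw [h]; exact (Finset.mem_sdiff.1 hx).1
      rcases Finset.mem_union.1 hxu with h'|h'
      · exact (Finset.mem_sdiff.1 hx).2 (hq₁ h')
      · exact (Finset.mem_sdiff.1 hx).2 (hq₂ h')
    · exact Or.inr (Or.inr (cross W₁ W₂ hq₁ hq₂))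
    · exact Or.inr (Or.inr (cross W₂ W₁ hq₂ hq₁).symm)
    · exfalso
      obtain ⟨x, hx⟩ := hYnee
      have hxu : x ∈ W₁ ∪ W₂ := by rw [h]; exact hYA hx
      rcases Finset.mem_union.1 hxu with h'|h'
      · exact (Finset.mem_sdiff.1 (hq₁ h')).2 hx
      · exact (Finset.mem_sdiff.1 (hq₂ h')).2 hx

end PhyloTree

namespace PhyloTree
variable {n : ℕ} (T : PhyloTree n)

theorem mem_lamSet {A Y Z u : Finset (Fin n)} :
    u ∈ lamSet T A Y Z ↔ (u ∈ dSet T A Y ∨ u = A) ∨ (u ∈ dSet T Aᶜ Z ∨ u = Aᶜ) := by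
  simp only [lamSet, Finset.mem_union, Finset.mem_singleton]

theorem mem_sidesF {A Y Z u : Finset (Fin n)} :
    u ∈ sidesF T A Y Z ↔ u ∈ lamSet T A Y Z ∨ uᶜ ∈ lamSet T A Y Z := by
  simp [sidesF]

theorem lamSet_mem_sidesF {A Y Z u : Finset (Fin n)} (h : u ∈ lamSet T A Y Z) :
    u ∈ sidesF T A Y Z := (T.mem_sidesF).2 (Or.inl h)

theorem sidesF_symm {A Y Z : Finset (Fin n)} :
    sidesF T Aᶜ Z Y = sidesF T A Y Z := by
  have h : lamSet T Aᶜ Z Y = lamSet T A Y Z := by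
    unfold lamSet
    rw [compl_compl, Finset.union_comm]
  unfold sidesF
  rw [h]

theorem sidesF_compl_mem {A Y Z u : Finset (Fin n)} (h : u ∈ sidesF T A Y Z) :
    uᶜ ∈ sidesF T A Y Z := by
  rcases (T.mem_sidesF).1 h with h|h
  · exact (T.mem_sidesF).2 (Or.inr (by rwa [compl_compl]))
  · exact (T.mem_sidesF).2 (Or.inl h)

theorem scompat_compls {A B : Finset (Fin n)} (h : SidesCompatible A B) :
    SidesCompatible Aᶜ Bᶜ :=
  scompat_symm (scompat_compl (scompat_symm (scompat_compl h)))

section Construction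

variable {A Y Z : Finset (Fin n)}
  (hA : A ∈ T.sides) (h2 : 2 ≤ A.card) (h2c : 2 ≤ Aᶜ.card)
  (hY : Y ∈ T.ntR A) (hZ : Z ∈ T.ntR Aᶜ)

include hA h2 h2c hY hZ

theorem lamSet_struct :
    ∀ u ∈ lamSet T A Y Z, u.Nonempty ∧ (u ⊆ A ∨ u ⊆ Aᶜ) := by
  intro u hu
  rcases (T.mem_lamSet).1 hu with (h|rfl)|(h|rfl)
  · obtain ⟨hnt, -⟩ := (T.mem_dSet).1 h
    exact ⟨Finset.nonempty_iff_ne_empty.2 (T.mem_ntR.1 hnt).2.1,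
      Or.inl (T.ntR_sub hnt)⟩
  · exact ⟨Finset.card_pos.1 (by omega), Or.inl (Finset.Subset.refl _)⟩
  · obtain ⟨hnt, -⟩ := (T.mem_dSet).1 h
    exact ⟨Finset.nonempty_iff_ne_empty.2 (T.mem_ntR.1 hnt).2.1,
      Or.inr (T.ntR_sub hnt)⟩
  · exact ⟨Finset.card_pos.1 (by omega), Or.inr (Finset.Subset.refl _)⟩

theorem lamSet_laminar :
    ∀ u ∈ lamSet T A Y Z, ∀ v ∈ lamSet T A Y Z,
      u ⊆ v ∨ v ⊆ u ∨ Disjoint u v := by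
  have part : ∀ (B YB : Finset (Fin n)), YB ∈ T.ntR B →
      ∀ u, (u ∈ dSet T B YB ∨ u = B) → ∀ v, (v ∈ dSet T B YB ∨ v = B) →
      u ⊆ v ∨ v ⊆ u ∨ Disjoint u v := by
    rintro B YB hYB u (hu|rfl) v (hv|rfl)
    · exact T.dSet_laminar hYB u hu v hv
    · exact Or.inl (T.ntR_sub ((T.mem_dSet).1 hu).1)
    · exact Or.inr (Or.inl (T.ntR_sub ((T.mem_dSet).1 hv).1))
    · exact Or.inl (Finset.Subset.refl _)
  have cross : ∀ u v : Finset (Fin n), u ⊆ A → v ⊆ Aᶜ → Disjoint u v :=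
    fun u v hu hv => Finset.disjoint_left.2 fun x hx hx' =>
      Finset.mem_compl.1 (hv hx') (hu hx)
  intro u hu v hv
  rcases (T.mem_lamSet).1 hu with hu'|hu' <;> rcases (T.mem_lamSet).1 hv with hv'|hv'
  · exact part A Y hY u hu' v hv'
  · refine Or.inr (Or.inr (cross u v ?_ ?_))
    · rcases hu' with h|rfl
      · exact T.ntR_sub ((T.mem_dSet).1 h).1
      · exact Finset.Subset.refl _
    · rcases hv' with h|rfl
      · exact T.ntR_sub ((T.mem_dSet).1 h).1
      · exact Finset.Subset.refl _
  · refine Or.inr (Or.inr (cross v u ?_ ?_).symm)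
    · rcases hv' with h|rfl
      · exact T.ntR_sub ((T.mem_dSet).1 h).1
      · exact Finset.Subset.refl _
    · rcases hu' with h|rfl
      · exact T.ntR_sub ((T.mem_dSet).1 h).1
      · exact Finset.Subset.refl _
  · exact part Aᶜ Z hZ u hu' v hv'

theorem sidesF_absorb :
    ∀ V : Finset (Fin n), V ⊆ A → V.Nonempty →
    (∀ u ∈ sidesF T A Y Z, SidesCompatible V u) → V ∈ sidesF T A Y Z := by
  intro V hVA hVne hcomp
  have hAmem : A ∈ lamSet T A Y Z := (T.mem_lamSet).2 (Or.inl (Or.inr rfl))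
  rcases eq_or_ne V A with rfl|hVneA
  · exact lamSet_mem_sidesF T hAmem
  have hAnu := T.side_ne_univ hA
  -- V is compatible within A with the whole restricted system
  have hstep : ∀ U ∈ T.restrict A, compatIn A V U := by
    intro U hU
    by_cases hU0 : U = ∅
    · subst hU0
      exact Or.inr (Or.inr (Or.inl (Finset.disjoint_empty_right V)))
    by_cases hUA : U = A
    · subst hUA
      exact Or.inl hVA
    have hUnt : U ∈ T.ntR A := T.mem_ntR.2 ⟨hU, hU0, hUA⟩
    have hUsub := T.ntR_sub hUnt
    rcases T.dSet_covering hY U hUnt with hD|hD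
    · have := hcomp U (lamSet_mem_sidesF T ((T.mem_lamSet).2 (Or.inl (Or.inl hD))))
      rcases this with h|h|h|h
      · exact Or.inl h
      · exact Or.inr (Or.inl h)
      · exact Or.inr (Or.inr (Or.inl h))
      · exfalso
        apply hAnu
        apply Finset.univ_subset_iff.1
        rw [← h]
        exact Finset.union_subset hVA hUsub
    · have := hcomp (A \ U) (lamSet_mem_sidesF T ((T.mem_lamSet).2 (Or.inl (Or.inl hD))))
      rcases this with h|h|h|h
      · -- V ⊆ A \ U : disjoint
        exact Or.inr (Or.inr (Or.inl (Finset.disjoint_left.2 fun x hx hxU =>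
          (Finset.mem_sdiff.1 (h hx)).2 hxU)))
      · -- A \ U ⊆ V : union = A
        refine Or.inr (Or.inr (Or.inr (Finset.Subset.antisymm
          (Finset.union_subset hVA hUsub) fun x hxA => ?_)))
        by_cases hxU : x ∈ U
        · exact Finset.mem_union.2 (Or.inr hxU)
        · exact Finset.mem_union.2 (Or.inl (h (Finset.mem_sdiff.2 ⟨hxA, hxU⟩)))
      · -- disjoint : V ⊆ U
        refine Or.inl fun x hx => ?_
        by_contra hxU
        exact Finset.disjoint_left.1 h hx (Finset.mem_sdiff.2 ⟨hVA hx, hxU⟩)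
      · exfalso
        apply hAnu
        apply Finset.univ_subset_iff.1
        rw [← h]
        exact Finset.union_subset hVA Finset.sdiff_subset
  have hVr : V ∈ T.restrict A :=
    T.restrict_max A.card A (le_refl _) hA V hVA hVne hVneA hstep
  have hVnt : V ∈ T.ntR A :=
    T.mem_ntR.2 ⟨hVr, Finset.nonempty_iff_ne_empty.1 hVne, hVneA⟩
  -- locate V w.r.t. the attachment edge {Y, A \ Y}
  have hYD : Y ∈ dSet T A Y := (T.mem_dSet).2 ⟨hY, Or.inl (Finset.Subset.refl _)⟩
  have hYcD : A \ Y ∈ dSet T A Y :=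
    (T.mem_dSet).2 ⟨T.ntR_compl_within hY, Or.inr (Finset.Subset.refl _)⟩
  have hYne' : Y.Nonempty := Finset.nonempty_iff_ne_empty.2 (T.mem_ntR.1 hY).2.1
  have hYA' : Y ⊆ A := T.ntR_sub hY
  have memD : ∀ W ∈ dSet T A Y, W ∈ sidesF T A Y Z := fun W h =>
    lamSet_mem_sidesF T ((T.mem_lamSet).2 (Or.inl (Or.inl h)))
  rcases hcomp Y (memD Y hYD) with h|h|h|h
  · exact memD V ((T.mem_dSet).2 ⟨hVnt, Or.inl h⟩)
  · -- Y ⊆ V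
    rcases hcomp (A \ Y) (memD _ hYcD) with h'|h'|h'|h'
    · exfalso
      obtain ⟨x, hx⟩ := hYne'
      exact (Finset.mem_sdiff.1 (h' (h hx))).2 hx
    · exfalso
      apply hVneA
      refine Finset.Subset.antisymm hVA fun x hxA => ?_
      by_cases hxY : x ∈ Y
      · exact h hxY
      · exact h' (Finset.mem_sdiff.2 ⟨hxA, hxY⟩)
    · have : V ⊆ Y := fun x hx => by
        by_contra hxY
        exact Finset.disjoint_left.1 h' hx (Finset.mem_sdiff.2 ⟨hVA hx, hxY⟩)
      have hVY : V = Y := Finset.Subset.antisymm this h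
      exact memD V (hVY ▸ hYD)
    · exfalso
      apply hAnu
      apply Finset.univ_subset_iff.1
      rw [← h']
      exact Finset.union_subset hVA Finset.sdiff_subset
  · exact memD V ((T.mem_dSet).2 ⟨hVnt, Or.inr fun x hx =>
      Finset.mem_sdiff.2 ⟨hVA hx, fun hxY => Finset.disjoint_left.1 h hx hxY⟩⟩)
  · exfalso
    apply hAnu
    apply Finset.univ_subset_iff.1
    rw [← h]
    exact Finset.union_subset hVA hYA'

end Construction

end PhyloTree

namespace PhyloTree
variable {n : ℕ} (T : PhyloTree n)

section Construction2

variable {A Y Z : Finset (Fin n)}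
  (hA : A ∈ T.sides) (h2 : 2 ≤ A.card) (h2c : 2 ≤ Aᶜ.card)
  (hY : Y ∈ T.ntR A) (hZ : Z ∈ T.ntR Aᶜ)

include hA h2 h2c hY hZ

theorem exists_sidesF_tree : ∃ T' : PhyloTree n, T'.sides = sidesF T A Y Z := by
  have hAc : Aᶜ ∈ T.sides := T.compl_mem A hA
  have hcc : Aᶜᶜ = A := compl_compl A
  have h2' : 2 ≤ Aᶜᶜ.card := by rw [hcc]; exact h2
  have hY' : Y ∈ T.ntR Aᶜᶜ := by rw [hcc]; exact hY
  have hAne : A.Nonempty := Finset.card_pos.1 (by omega)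
  have hAcne : Aᶜ.Nonempty := Finset.card_pos.1 (by omega)
  have base : ∀ u ∈ lamSet T A Y Z, ∀ v ∈ lamSet T A Y Z, SidesCompatible u v := by
    intro u hu v hv
    rcases T.lamSet_laminar hA h2 h2c hY hZ u hu v hv with h|h|h
    · exact Or.inl h
    · exact Or.inr (Or.inl h)
    · exact Or.inr (Or.inr (Or.inl h))
  refine ⟨⟨sidesF T A Y Z, ?_, fun u hu => T.sidesF_compl_mem hu, ?_, ?_, ?_⟩, rfl⟩
  · -- proper
    intro u hu
    rcases (T.mem_sidesF).1 hu with h|h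
    · obtain ⟨hne, hsub⟩ := T.lamSet_struct hA h2 h2c hY hZ u h
      refine ⟨hne, fun he => ?_⟩
      rcases hsub with h'|h'
      · obtain ⟨x, hx⟩ := hAcne
        exact Finset.mem_compl.1 hx (h' (he ▸ Finset.mem_univ x))
      · obtain ⟨x, hx⟩ := hAne
        exact Finset.mem_compl.1 (h' (he ▸ Finset.mem_univ x)) hx
    · obtain ⟨hne, hsub⟩ := T.lamSet_struct hA h2 h2c hY hZ uᶜ h
      constructor
      · rcases hsub with h'|h'
        · obtain ⟨x, hx⟩ := hAcne
          refine ⟨x, ?_⟩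
          by_contra hxu
          exact Finset.mem_compl.1 hx (h' (Finset.mem_compl.2 hxu))
        · obtain ⟨x, hx⟩ := hAne
          refine ⟨x, ?_⟩
          by_contra hxu
          exact Finset.mem_compl.1 (h' (Finset.mem_compl.2 hxu)) hx
      · intro he
        obtain ⟨x, hx⟩ := hne
        exact Finset.mem_compl.1 hx (he ▸ Finset.mem_univ x)
  · -- singletons
    intro x
    by_cases hx : x ∈ A
    · refine lamSet_mem_sidesF T ((T.mem_lamSet).2 (Or.inl (Or.inl ((T.mem_dSet).2
        ⟨T.mem_ntR.2 ⟨T.side_mem_restrict (T.singleton_mem x)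
          (Finset.singleton_subset_iff.2 hx), Finset.singleton_ne_empty x, ?_⟩, ?_⟩))))
      · intro he
        have := congrArg Finset.card he
        rw [Finset.card_singleton] at this
        omega
      · by_cases hxY : x ∈ Y
        · exact Or.inl (Finset.singleton_subset_iff.2 hxY)
        · exact Or.inr (Finset.singleton_subset_iff.2 (Finset.mem_sdiff.2 ⟨hx, hxY⟩))
    · have hx' : x ∈ Aᶜ := Finset.mem_compl.2 hx
      refine lamSet_mem_sidesF T ((T.mem_lamSet).2 (Or.inr (Or.inl ((T.mem_dSet).2
        ⟨T.mem_ntR.2 ⟨T.side_mem_restrict (T.singleton_mem x)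
          (Finset.singleton_subset_iff.2 hx'), Finset.singleton_ne_empty x, ?_⟩, ?_⟩))))
      · intro he
        have := congrArg Finset.card he
        rw [Finset.card_singleton] at this
        omega
      · by_cases hxZ : x ∈ Z
        · exact Or.inl (Finset.singleton_subset_iff.2 hxZ)
        · exact Or.inr (Finset.singleton_subset_iff.2 (Finset.mem_sdiff.2 ⟨hx', hxZ⟩))
  · -- compatible
    intro u hu v hv
    rcases (T.mem_sidesF).1 hu with h|h <;> rcases (T.mem_sidesF).1 hv with h'|h'
    · exact base u h v h'
    · have := scompat_compl (base u h vᶜ h')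
      rwa [compl_compl] at this
    · have := scompat_symm (scompat_compl (base v h' uᶜ h))
      rwa [compl_compl] at this
    · have := scompat_compls (base uᶜ h vᶜ h')
      rwa [compl_compl, compl_compl] at this
  · -- maximal
    intro V hVne hVnu hcomp
    have hVcne : Vᶜ.Nonempty := by
      by_contra hc
      apply hVnu
      apply Finset.eq_univ_iff_forall.2
      intro x
      by_contra hx
      exact hc ⟨x, Finset.mem_compl.2 hx⟩
    have hcompc : ∀ u ∈ sidesF T A Y Z, SidesCompatible Vᶜ u := by
      intro u hu
      have := scompat_compls (hcomp uᶜ (T.sidesF_compl_mem hu))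
      rwa [compl_compl] at this
    have hAm : A ∈ sidesF T A Y Z :=
      lamSet_mem_sidesF T ((T.mem_lamSet).2 (Or.inl (Or.inr rfl)))
    have absb2 : ∀ W : Finset (Fin n), W ⊆ Aᶜ → W.Nonempty →
        (∀ u ∈ sidesF T A Y Z, SidesCompatible W u) → W ∈ sidesF T A Y Z := by
      intro W hWA hWne hcompW
      have hcompW' : ∀ u ∈ sidesF T Aᶜ Z Y, SidesCompatible W u := by
        intro u hu
        rw [T.sidesF_symm] at hu
        exact hcompW u hu
      have := T.sidesF_absorb hAc h2c h2' hZ hY' W hWA hWne hcompW'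
      rwa [T.sidesF_symm] at this
    rcases side_kind (hcomp A hAm) with hk|hk|hk|hk
    · exact T.sidesF_absorb hA h2 h2c hY hZ V hk hVne hcomp
    · -- A ⊆ V, so Vᶜ ⊆ Aᶜ
      have hsub : Vᶜ ⊆ Aᶜ := by
        intro x hx
        exact Finset.mem_compl.2 fun hxA => Finset.mem_compl.1 hx (hk hxA)
      have := absb2 Vᶜ hsub hVcne hcompc
      have := T.sidesF_compl_mem this
      rwa [compl_compl] at this
    · exact absb2 V hk hVne hcomp
    · -- Aᶜ ⊆ V, so Vᶜ ⊆ A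
      have hsub : Vᶜ ⊆ A := by
        intro x hx
        by_contra hxA
        exact Finset.mem_compl.1 hx (hk (Finset.mem_compl.2 hxA))
      have := T.sidesF_absorb hA h2 h2c hY hZ Vᶜ hsub hVcne hcompc
      have := T.sidesF_compl_mem this
      rwa [compl_compl] at this

theorem restrict_sidesF_left :
    (sidesF T A Y Z).image (· ∩ A) = T.restrict A := by
  have hAcne : Aᶜ.Nonempty := Finset.card_pos.1 (by omega)
  have hempty : (∅ : Finset (Fin n)) ∈ T.restrict A := by
    obtain ⟨x, hx⟩ := hAcne
    refine (T.mem_restrict).2 ⟨{x}, T.singleton_mem x, ?_⟩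
    rw [Finset.singleton_inter_of_notMem (Finset.mem_compl.1 hx)]
  have hinter_c : ∀ u : Finset (Fin n), u ⊆ Aᶜ → u ∩ A = ∅ := by
    intro u hu
    rw [Finset.eq_empty_iff_forall_notMem]
    intro x hx
    obtain ⟨h1, h2⟩ := Finset.mem_inter.1 hx
    exact Finset.mem_compl.1 (hu h1) h2
  apply Finset.Subset.antisymm
  · intro U hU
    obtain ⟨u, hu, rfl⟩ := Finset.mem_image.1 hU
    rcases (T.mem_sidesF).1 hu with h|h
    · rcases (T.mem_lamSet).1 h with (h'|rfl)|(h'|rfl)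
      · rw [Finset.inter_eq_left.2 (T.ntR_sub ((T.mem_dSet).1 h').1)]
        exact (T.mem_ntR.1 ((T.mem_dSet).1 h').1).1
      · rw [Finset.inter_self]
        exact T.side_mem_restrict hA (Finset.Subset.refl _)
      · rw [hinter_c u (T.ntR_sub ((T.mem_dSet).1 h').1)]
        exact hempty
      · rw [hinter_c Aᶜ (Finset.Subset.refl _)]
        exact hempty
    · rcases (T.mem_lamSet).1 h with (h'|h')|(h'|h')
      · -- uᶜ ∈ dSet A Y : u ∩ A = A \ uᶜ
        have : u ∩ A = A \ uᶜ := by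
          ext x
          simp only [Finset.mem_inter, Finset.mem_sdiff, Finset.mem_compl, not_not]
          tauto
        rw [this]
        exact T.restrict_compl_within (T.mem_ntR.1 ((T.mem_dSet).1 h').1).1
      · -- uᶜ = A : u ∩ A = ∅
        have hu' : u = Aᶜ := by rw [← compl_compl u, h']
        rw [hu', hinter_c Aᶜ (Finset.Subset.refl _)]
        exact hempty
      · -- uᶜ ∈ dSet Aᶜ Z : A ⊆ u
        have hsub : A ⊆ u := by
          intro x hx
          by_contra hxu
          exact Finset.mem_compl.1 ((T.ntR_sub ((T.mem_dSet).1 h').1)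
            (Finset.mem_compl.2 hxu)) hx
        rw [Finset.inter_eq_right.2 hsub]
        exact T.side_mem_restrict hA (Finset.Subset.refl _)
      · -- uᶜ = Aᶜ : u = A
        have hu' : u = A := by rw [← compl_compl u, h', compl_compl]
        rw [hu', Finset.inter_self]
        exact T.side_mem_restrict hA (Finset.Subset.refl _)
  · intro U hU
    by_cases hU0 : U = ∅
    · subst hU0
      refine Finset.mem_image.2 ⟨Aᶜ, ?_, hinter_c Aᶜ (Finset.Subset.refl _)⟩
      exact lamSet_mem_sidesF T ((T.mem_lamSet).2 (Or.inr (Or.inr rfl)))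
    by_cases hUA : U = A
    · refine Finset.mem_image.2 ⟨A, ?_, by rw [Finset.inter_self]; exact hUA.symm⟩
      exact lamSet_mem_sidesF T ((T.mem_lamSet).2 (Or.inl (Or.inr rfl)))
    have hUnt : U ∈ T.ntR A := T.mem_ntR.2 ⟨hU, hU0, hUA⟩
    have hUsub := T.ntR_sub hUnt
    rcases T.dSet_covering hY U hUnt with hD|hD
    · refine Finset.mem_image.2 ⟨U, ?_, Finset.inter_eq_left.2 hUsub⟩
      exact lamSet_mem_sidesF T ((T.mem_lamSet).2 (Or.inl (Or.inl hD)))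
    · refine Finset.mem_image.2 ⟨(A \ U)ᶜ, ?_, ?_⟩
      · exact T.sidesF_compl_mem
          (lamSet_mem_sidesF T ((T.mem_lamSet).2 (Or.inl (Or.inl hD))))
      · ext x
        simp only [Finset.mem_inter, Finset.mem_compl, Finset.mem_sdiff, not_and, not_not]
        constructor
        · rintro ⟨h1, h2⟩
          exact h1 h2
        · intro hx
          exact ⟨fun _ => hx, hUsub hx⟩

theorem restrict_sidesF_right :
    (sidesF T A Y Z).image (· ∩ Aᶜ) = T.restrict Aᶜ := by
  have hAc : Aᶜ ∈ T.sides := T.compl_mem A hA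
  have hcc : Aᶜᶜ = A := compl_compl A
  have h2' : 2 ≤ Aᶜᶜ.card := by rw [hcc]; exact h2
  have hY' : Y ∈ T.ntR Aᶜᶜ := by rw [hcc]; exact hY
  have := T.restrict_sidesF_left hAc h2c h2' hZ hY'
  rwa [T.sidesF_symm] at this

end Construction2

end PhyloTree

namespace PhyloTree
variable {n : ℕ} (T : PhyloTree n)

theorem ntR_congr {T' : PhyloTree n} {A : Finset (Fin n)}
    (h : T'.restrict A = T.restrict A) : T'.ntR A = T.ntR A := by
  unfold ntR
  rw [h]

/-- classification of the sides of a tree agreeing with `T` outside the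
split `A|Aᶜ`, inside `A`. -/
theorem half_classify (T' : PhyloTree n) {A : Finset (Fin n)}
    (hA : A ∈ T.sides) (h2 : 2 ≤ A.card) (hA' : A ∈ T'.sides)
    (hr : T'.restrict A = T.restrict A) :
    ∃ Y ∈ T.ntR A, (∀ S ∈ T'.sides, S ⊆ A → S ≠ A → S ∈ dSet T A Y) ∧
      (∀ u ∈ dSet T A Y, u ∈ T'.sides) := by
  obtain ⟨Y, Y₂, hYs, hY₂s, hd, hu, hcov⟩ := T'.maxpair hA' h2
  have hYA : Y ⊆ A := hu ▸ Finset.subset_union_left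
  have hY₂A : Y₂ ⊆ A := hu ▸ Finset.subset_union_right
  have hYne := T'.side_nonempty hYs
  have hY₂ne := T'.side_nonempty hY₂s
  have hntR : T'.ntR A = T.ntR A := T.ntR_congr hr
  have hYneA : Y ≠ A := by
    rintro rfl
    obtain ⟨x, hx⟩ := hY₂ne
    exact Finset.disjoint_right.1 hd hx (hY₂A hx)
  have hY₂eq : A \ Y = Y₂ := by
    ext x
    simp only [Finset.mem_sdiff]
    constructor
    · rintro ⟨hxA, hxY⟩
      rcases Finset.mem_union.1 (hu ▸ hxA : x ∈ Y ∪ Y₂) with h|h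
      · exact absurd h hxY
      · exact h
    · intro hx
      exact ⟨hY₂A hx, fun hxY => Finset.disjoint_right.1 hd hx hxY⟩
  have hYeq2 : A \ Y₂ = Y := by
    rw [← hY₂eq, Finset.sdiff_sdiff_eq_self hYA]
  have hYnt : Y ∈ T.ntR A := by
    rw [← hntR]
    exact T'.mem_ntR.2 ⟨T'.side_mem_restrict hYs hYA,
      Finset.nonempty_iff_ne_empty.1 hYne, hYneA⟩
  refine ⟨Y, hYnt, ?_, ?_⟩
  · intro S hS hSA hSneA
    have hSnt : S ∈ T.ntR A := by
      rw [← hntR]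
      exact T'.mem_ntR.2 ⟨T'.side_mem_restrict hS hSA,
        Finset.nonempty_iff_ne_empty.1 (T'.side_nonempty hS), hSneA⟩
    rcases hcov S hS hSA hSneA with h|h
    · exact (T.mem_dSet).2 ⟨hSnt, Or.inl h⟩
    · exact (T.mem_dSet).2 ⟨hSnt, Or.inr (hY₂eq ▸ h)⟩
  · intro u hu'
    obtain ⟨hunt, hpart⟩ := (T.mem_dSet).1 hu'
    have hunt' : u ∈ T'.ntR A := hntR ▸ hunt
    rcases (T'.mem_ntR_char hA').1 hunt' with ⟨h1, _⟩|⟨W, hW, hWA, rfl⟩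
    · exact h1
    · rcases hcov W hW hWA.subset hWA.ne with h|h
      · -- W ⊆ Y, so A \ W ⊇ A \ Y = Y₂
        have hsup : Y₂ ⊆ A \ W := by
          rw [← hY₂eq]
          exact fun x hx => Finset.mem_sdiff.2 ⟨(Finset.mem_sdiff.1 hx).1,
            fun hxW => (Finset.mem_sdiff.1 hx).2 (h hxW)⟩
        rcases hpart with hp|hp
        · exfalso
          obtain ⟨x, hx⟩ := hY₂ne
          have hxY : x ∈ Y := hp (hsup hx)
          exact Finset.disjoint_right.1 hd hx hxY
        · have : A \ W = Y₂ := Finset.Subset.antisymm (hY₂eq ▸ hp) hsup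
          rw [this]
          exact hY₂s
      · -- W ⊆ Y₂, so A \ W ⊇ Y
        have hsup : Y ⊆ A \ W := by
          rw [← hYeq2]
          exact fun x hx => Finset.mem_sdiff.2 ⟨(Finset.mem_sdiff.1 hx).1,
            fun hxW => (Finset.mem_sdiff.1 hx).2 (h hxW)⟩
        rcases hpart with hp|hp
        · have : A \ W = Y := Finset.Subset.antisymm hp hsup
          rw [this]
          exact hYs
        · exfalso
          obtain ⟨x, hx⟩ := hYne
          have := Finset.mem_sdiff.1 (hY₂eq ▸ hp (hsup hx) : x ∈ A \ Y)
          exact this.2 hx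

/-- every tree sharing the split `A|Aᶜ` and both restrictions with `T`
has side system `sidesF T A Y Z`. -/
theorem classify (T' : PhyloTree n) {A : Finset (Fin n)}
    (hA : A ∈ T.sides) (h2 : 2 ≤ A.card) (h2c : 2 ≤ Aᶜ.card)
    (hA' : A ∈ T'.sides)
    (hrA : T'.restrict A = T.restrict A) (hrAc : T'.restrict Aᶜ = T.restrict Aᶜ) :
    ∃ Y ∈ T.ntR A, ∃ Z ∈ T.ntR Aᶜ, T'.sides = sidesF T A Y Z := by
  have hAc : Aᶜ ∈ T.sides := T.compl_mem A hA
  have hAc' : Aᶜ ∈ T'.sides := T'.compl_mem A hA'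
  obtain ⟨Y, hY, hfwd, hbwd⟩ := T.half_classify T' hA h2 hA' hrA
  obtain ⟨Z, hZ, hfwdc, hbwdc⟩ := T.half_classify T' hAc h2c hAc' hrAc
  refine ⟨Y, hY, Z, hZ, ?_⟩
  ext S
  constructor
  · intro hS
    rcases side_kind (T'.compatible S hS A hA') with hk|hk|hk|hk
    · rcases eq_or_ne S A with rfl|hne
      · exact lamSet_mem_sidesF T ((T.mem_lamSet).2 (Or.inl (Or.inr rfl)))
      · exact lamSet_mem_sidesF T ((T.mem_lamSet).2 (Or.inl (Or.inl (hfwd S hS hk hne))))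
    · -- A ⊆ S : Sᶜ ⊆ Aᶜ
      have hsub : Sᶜ ⊆ Aᶜ := fun x hx =>
        Finset.mem_compl.2 fun hxA => Finset.mem_compl.1 hx (hk hxA)
      have hSc : Sᶜ ∈ T'.sides := T'.compl_mem S hS
      rcases eq_or_ne Sᶜ Aᶜ with he|hne
      · have : S = A := by

          rw [← compl_compl S, he, compl_compl]
        rw [this]
        exact lamSet_mem_sidesF T ((T.mem_lamSet).2 (Or.inl (Or.inr rfl)))
      · have := hfwdc Sᶜ hSc hsub hne
        exact (T.mem_sidesF).2 (Or.inr ((T.mem_lamSet).2 (Or.inr (Or.inl this))))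
    · -- S ⊆ Aᶜ
      rcases eq_or_ne S Aᶜ with rfl|hne
      · exact lamSet_mem_sidesF T ((T.mem_lamSet).2 (Or.inr (Or.inr rfl)))
      · exact lamSet_mem_sidesF T ((T.mem_lamSet).2 (Or.inr (Or.inl (hfwdc S hS hk hne))))
    · -- Aᶜ ⊆ S : Sᶜ ⊆ A
      have hsub : Sᶜ ⊆ A := fun x hx => by
        by_contra hxA
        exact Finset.mem_compl.1 hx (hk (Finset.mem_compl.2 hxA))
      have hSc : Sᶜ ∈ T'.sides := T'.compl_mem S hS
      rcases eq_or_ne Sᶜ A with he|hne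
      · have : S = Aᶜ := by rw [← compl_compl S, he]
        rw [this]
        exact lamSet_mem_sidesF T ((T.mem_lamSet).2 (Or.inr (Or.inr rfl)))
      · have := hfwd Sᶜ hSc hsub hne
        exact (T.mem_sidesF).2 (Or.inr ((T.mem_lamSet).2 (Or.inl (Or.inl this))))
  · intro hS
    have main : ∀ u : Finset (Fin n), u ∈ lamSet T A Y Z → u ∈ T'.sides := by
      intro u hu
      rcases (T.mem_lamSet).1 hu with (h|rfl)|(h|rfl)
      · exact hbwd u h
      · exact hA'
      · exact hbwdc u h
      · exact hAc'
    rcases (T.mem_sidesF).1 hS with h|h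
    · exact main S h
    · have := T'.compl_mem Sᶜ (main Sᶜ h)
      rwa [compl_compl] at this

/-- elements of `sidesF` lying strictly inside `A` are exactly `dSet T A Y`. -/
theorem sidesF_inA {A Y Z u : Finset (Fin n)} (hAcne : Aᶜ.Nonempty)
    (hu : u ∈ sidesF T A Y Z) (huA : u ⊆ A) (hne : u.Nonempty) (hneA : u ≠ A) :
    u ∈ dSet T A Y := by
  have hACdisj : ∀ v : Finset (Fin n), v ⊆ A → v ⊆ Aᶜ → v = ∅ := by
    intro v h1 h2
    rw [Finset.eq_empty_iff_forall_notMem]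
    intro x hx
    exact Finset.mem_compl.1 (h2 hx) (h1 hx)
  have hAcnA : ¬ (Aᶜ ⊆ A) := by
    intro h
    obtain ⟨x, hx⟩ := hAcne
    exact Finset.mem_compl.1 hx (h hx)
  rcases (T.mem_sidesF).1 hu with h|h
  · rcases (T.mem_lamSet).1 h with (h'|rfl)|(h'|rfl)
    · exact h'
    · exact absurd rfl hneA
    · exact absurd (hACdisj u huA (T.ntR_sub ((T.mem_dSet).1 h').1))
        (Finset.nonempty_iff_ne_empty.1 hne)
    · exact absurd huA hAcnA
  · exfalso
    have hsubc : Aᶜ ⊆ uᶜ := fun x hx => Finset.mem_compl.2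
      fun hxu => Finset.mem_compl.1 hx (huA hxu)
    rcases (T.mem_lamSet).1 h with (h'|h')|(h'|h')
    · -- uᶜ ⊆ A and Aᶜ ⊆ uᶜ
      obtain ⟨x, hx⟩ := hAcne
      exact Finset.mem_compl.1 hx ((T.ntR_sub ((T.mem_dSet).1 h').1) (hsubc hx))
    · -- uᶜ = A : u = Aᶜ ⊆ A
      apply hAcnA
      have hAu : Aᶜ = u := by rw [← h', compl_compl]
      rw [hAu]
      exact huA
    · -- uᶜ ⊆ Aᶜ : A ⊆ u, u = A
      apply hneA
      refine Finset.Subset.antisymm huA fun x hx => ?_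
      by_contra hxu
      exact Finset.mem_compl.1 ((T.ntR_sub ((T.mem_dSet).1 h').1)
        (Finset.mem_compl.2 hxu)) hx
    · -- uᶜ = Aᶜ : u = A
      apply hneA
      rw [← compl_compl u, h', compl_compl]

/-- first coordinate of the attachment data is determined up to complement. -/
theorem sidesF_fst {A Y Z Y' Z' : Finset (Fin n)} (hAcne : Aᶜ.Nonempty)
    (hY : Y ∈ T.ntR A) (hY' : Y' ∈ T.ntR A)
    (heq : sidesF T A Y' Z' = sidesF T A Y Z) :
    Y' = Y ∨ Y' = A \ Y := by
  have hYA := T.ntR_sub hY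
  have hY'A := T.ntR_sub hY'
  have hYne : Y.Nonempty := Finset.nonempty_iff_ne_empty.2 (T.mem_ntR.1 hY).2.1
  have hY'ne : Y'.Nonempty := Finset.nonempty_iff_ne_empty.2 (T.mem_ntR.1 hY').2.1
  have hYrest : (A \ Y).Nonempty := by
    obtain ⟨x, hx, hxY⟩ := Finset.exists_of_ssubset
      (lt_of_le_of_ne hYA (T.mem_ntR.1 hY).2.2)
    exact ⟨x, Finset.mem_sdiff.2 ⟨hx, hxY⟩⟩
  have hY'rest : (A \ Y').Nonempty := by
    obtain ⟨x, hx, hxY⟩ := Finset.exists_of_ssubset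
      (lt_of_le_of_ne hY'A (T.mem_ntR.1 hY').2.2)
    exact ⟨x, Finset.mem_sdiff.2 ⟨hx, hxY⟩⟩
  have hmem1 : Y' ∈ dSet T A Y := by
    have hin : Y' ∈ sidesF T A Y Z := by
      rw [← heq]
      exact lamSet_mem_sidesF T ((T.mem_lamSet).2 (Or.inl (Or.inl
        ((T.mem_dSet).2 ⟨hY', Or.inl (Finset.Subset.refl _)⟩))))
    exact T.sidesF_inA hAcne hin hY'A hY'ne (T.mem_ntR.1 hY').2.2
  have hmem2 : A \ Y' ∈ dSet T A Y := by
    have h1 : A \ Y' ∈ T.ntR A := T.ntR_compl_within hY'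
    have h2 : (A \ Y') ≠ A := by
      intro he
      obtain ⟨x, hx⟩ := hY'ne
      have : x ∈ A \ Y' := by rw [he]; exact hY'A hx
      exact (Finset.mem_sdiff.1 this).2 hx
    have hin : A \ Y' ∈ sidesF T A Y Z := by
      rw [← heq]
      exact lamSet_mem_sidesF T ((T.mem_lamSet).2 (Or.inl (Or.inl
        ((T.mem_dSet).2 ⟨h1, Or.inr (Finset.Subset.refl _)⟩))))
    exact T.sidesF_inA hAcne hin Finset.sdiff_subset hY'rest h2
  have hcup : Y' ∪ (A \ Y') = A := Finset.union_sdiff_of_subset hY'A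
  rcases ((T.mem_dSet).1 hmem1).2 with hp1|hp1 <;>
    rcases ((T.mem_dSet).1 hmem2).2 with hp2|hp2
  · exfalso
    obtain ⟨x, hx⟩ := hYrest
    have hxA := (Finset.mem_sdiff.1 hx).1
    have hxu : x ∈ Y' ∪ (A \ Y') := by rw [hcup]; exact hxA
    have hxY : x ∈ Y := by
      rcases Finset.mem_union.1 hxu with h|h
      · exact hp1 h
      · exact hp2 h
    exact (Finset.mem_sdiff.1 hx).2 hxY
  · left
    refine Finset.Subset.antisymm hp1 fun x hx => ?_
    by_contra hxY'
    have : x ∈ A \ Y' := Finset.mem_sdiff.2 ⟨hYA hx, hxY'⟩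
    exact (Finset.mem_sdiff.1 (hp2 this)).2 hx
  · right
    refine Finset.Subset.antisymm hp1 fun x hx => ?_
    by_contra hxY'
    have : x ∈ A \ Y' := Finset.mem_sdiff.2 ⟨(Finset.mem_sdiff.1 hx).1, hxY'⟩
    exact (Finset.mem_sdiff.1 hx).2 (hp2 this)
  · exfalso
    obtain ⟨x, hx⟩ := hYne
    have hxA := hYA hx
    have hxu : x ∈ Y' ∪ (A \ Y') := by rw [hcup]; exact hxA
    rcases Finset.mem_union.1 hxu with h|h
    · exact (Finset.mem_sdiff.1 (hp1 h)).2 hx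
    · exact (Finset.mem_sdiff.1 (hp2 h)).2 hx

/-- the value of `sidesF` is unchanged by complementing the attachment data. -/
theorem sidesF_swap_fst {A Y Z : Finset (Fin n)} (hYA : Y ⊆ A) :
    sidesF T A (A \ Y) Z = sidesF T A Y Z := by
  unfold sidesF lamSet
  rw [T.dSet_swap hYA]

theorem sidesF_swap_snd {A Y Z : Finset (Fin n)} (hZA : Z ⊆ Aᶜ) :
    sidesF T A Y (Aᶜ \ Z) = sidesF T A Y Z := by
  unfold sidesF lamSet
  rw [T.dSet_swap hZA]

end PhyloTree

namespace PhyloTree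
variable {n : ℕ}

theorem restrict_congr {T₁ T₂ : PhyloTree n} (h : T₁.sides = T₂.sides)
    (X : Finset (Fin n)) : T₁.restrict X = T₂.restrict X := by
  unfold restrict
  rw [h]

/-- all conceivable side systems of the output of a TBR move across `A|Aᶜ`. -/
def SFinD (T : PhyloTree n) (A : Finset (Fin n)) : Finset (Finset (Finset (Fin n))) :=
  ((T.ntR A) ×ˢ (T.ntR Aᶜ)).image (fun p => sidesF T A p.1 p.2)

open Classical in
/-- recover a tree from its side system. -/
noncomputable def treeOf (T : PhyloTree n) (s : Finset (Finset (Fin n))) : PhyloTree n :=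
  if h : ∃ T' : PhyloTree n, T'.sides = s then h.choose else T

theorem treeOf_sides (T : PhyloTree n) {s : Finset (Finset (Fin n))}
    (h : ∃ T' : PhyloTree n, T'.sides = s) : (treeOf T s).sides = s := by
  rw [treeOf]
  rw [dif_pos h]
  exact h.choose_spec

/-- the moves across the split `A|Aᶜ`, as a finite set. -/
noncomputable def moveF (T : PhyloTree n) (A : Finset (Fin n)) : Finset (Move n) :=
  ((SFinD T A).erase T.sides).image (fun s => (Sym2.mk A Aᶜ, treeOf T s))

variable (T : PhyloTree n)

section Count

variable {A : Finset (Fin n)}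
  (hA : A ∈ T.sides) (h2 : 2 ≤ A.card) (h2c : 2 ≤ Aᶜ.card)

include hA h2 h2c

theorem mem_SFinD {s : Finset (Finset (Fin n))} :
    s ∈ SFinD T A ↔ ∃ T' : PhyloTree n, T'.sides = s ∧ A ∈ T'.sides ∧
      T'.restrict A = T.restrict A ∧ T'.restrict Aᶜ = T.restrict Aᶜ := by
  constructor
  · intro hs
    obtain ⟨p, hp, rfl⟩ := Finset.mem_image.1 hs
    obtain ⟨hY, hZ⟩ := Finset.mem_product.1 hp
    obtain ⟨T', hT'⟩ := T.exists_sidesF_tree hA h2 h2c hY hZ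
    refine ⟨T', hT', ?_, ?_, ?_⟩
    · rw [hT']
      exact lamSet_mem_sidesF T ((T.mem_lamSet).2 (Or.inl (Or.inr rfl)))
    · have : T'.restrict A = T'.sides.image (· ∩ A) := rfl
      rw [this, hT']
      exact T.restrict_sidesF_left hA h2 h2c hY hZ
    · have : T'.restrict Aᶜ = T'.sides.image (· ∩ Aᶜ) := rfl
      rw [this, hT']
      exact T.restrict_sidesF_right hA h2 h2c hY hZ
  · rintro ⟨T', rfl, hA', hr1, hr2⟩
    obtain ⟨Y, hY, Z, hZ, hT'⟩ := T.classify T' hA h2 h2c hA' hr1 hr2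
    exact Finset.mem_image.2 ⟨(Y, Z), Finset.mem_product.2 ⟨hY, hZ⟩, hT'.symm⟩

theorem card_SFinD : (SFinD T A).card = (2 * A.card - 3) * (2 * Aᶜ.card - 3) := by
  classical
  have hAc : Aᶜ ∈ T.sides := T.compl_mem A hA
  have hAne : A.Nonempty := Finset.card_pos.1 (by omega)
  have hAcne : Aᶜ.Nonempty := Finset.card_pos.1 (by omega)
  have hcc : Aᶜᶜ = A := compl_compl A
  set P := (T.ntR A) ×ˢ (T.ntR Aᶜ) with hP
  set f : Finset (Fin n) × Finset (Fin n) → Finset (Finset (Fin n)) :=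
    (fun p => sidesF T A p.1 p.2) with hf
  have fiber4 : ∀ p ∈ P, (P.filter (fun q => f q = f p)).card = 4 := by
    rintro ⟨Y, Z⟩ hp
    obtain ⟨hY, hZ⟩ := Finset.mem_product.1 hp
    have hYA := T.ntR_sub hY
    have hZA := T.ntR_sub hZ
    have hYne : Y.Nonempty := Finset.nonempty_iff_ne_empty.2 (T.mem_ntR.1 hY).2.1
    have hZne : Z.Nonempty := Finset.nonempty_iff_ne_empty.2 (T.mem_ntR.1 hZ).2.1
    have hYC : A \ Y ∈ T.ntR A := T.ntR_compl_within hY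
    have hZC : Aᶜ \ Z ∈ T.ntR Aᶜ := T.ntR_compl_within hZ
    have hYne' : Y ≠ A \ Y := by
      obtain ⟨x, hx⟩ := hYne
      intro he
      exact (Finset.mem_sdiff.1 (he ▸ hx)).2 hx
    have hZne' : Z ≠ Aᶜ \ Z := by
      obtain ⟨x, hx⟩ := hZne
      intro he
      exact (Finset.mem_sdiff.1 (he ▸ hx)).2 hx
    have hfilter : P.filter (fun q => f q = f (Y, Z)) =
        {(Y, Z), (A \ Y, Z), (Y, Aᶜ \ Z), (A \ Y, Aᶜ \ Z)} := by
      ext ⟨Y', Z'⟩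
      simp only [Finset.mem_filter, Finset.mem_insert, Finset.mem_singleton, Prod.mk.injEq]
      constructor
      · rintro ⟨hq, heq⟩
        obtain ⟨hY', hZ'⟩ := Finset.mem_product.1 hq
        have h1 : Y' = Y ∨ Y' = A \ Y := T.sidesF_fst hAcne hY hY' heq
        have heq' : sidesF T Aᶜ Z' Y' = sidesF T Aᶜ Z Y := by
          rw [T.sidesF_symm, T.sidesF_symm]
          exact heq
        have hAcc_ne : Aᶜᶜ.Nonempty := by rw [hcc]; exact hAne
        have h2' : Z' = Z ∨ Z' = Aᶜ \ Z := T.sidesF_fst hAcc_ne hZ hZ' heq'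
        tauto
      · intro hcase
        have m1 : (Y, Z) ∈ P := hp
        have m2 : ((A \ Y : Finset (Fin n)), Z) ∈ P :=
          Finset.mem_product.2 ⟨hYC, hZ⟩
        have m3 : (Y, (Aᶜ \ Z : Finset (Fin n))) ∈ P :=
          Finset.mem_product.2 ⟨hY, hZC⟩
        have m4 : ((A \ Y : Finset (Fin n)), (Aᶜ \ Z : Finset (Fin n))) ∈ P :=
          Finset.mem_product.2 ⟨hYC, hZC⟩
        have e2 : f ((A \ Y : Finset (Fin n)), Z) = f (Y, Z) := T.sidesF_swap_fst hYA
        have e3 : f (Y, (Aᶜ \ Z : Finset (Fin n))) = f (Y, Z) := T.sidesF_swap_snd hZA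
        have e4 : f ((A \ Y : Finset (Fin n)), (Aᶜ \ Z : Finset (Fin n))) = f (Y, Z) := by
          show sidesF T A (A \ Y) (Aᶜ \ Z) = sidesF T A Y Z
          rw [T.sidesF_swap_snd hZA, T.sidesF_swap_fst hYA]
        rcases hcase with ⟨rfl, rfl⟩|⟨rfl, rfl⟩|⟨rfl, rfl⟩|⟨rfl, rfl⟩
        · exact ⟨m1, rfl⟩
        · exact ⟨m2, e2⟩
        · exact ⟨m3, e3⟩
        · exact ⟨m4, e4⟩
    rw [hfilter]
    rw [Finset.card_insert_of_notMem (by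
        intro hm
        simp only [Finset.mem_insert, Finset.mem_singleton, Prod.mk.injEq] at hm
        rcases hm with ⟨h, -⟩|⟨-, h⟩|⟨h, -⟩
        · exact hYne' h
        · exact hZne' h
        · exact hYne' h),
      Finset.card_insert_of_notMem (by
        intro hm
        simp only [Finset.mem_insert, Finset.mem_singleton, Prod.mk.injEq] at hm
        rcases hm with ⟨h, -⟩|⟨-, h⟩
        · exact hYne' h.symm
        · exact hZne' h),
      Finset.card_insert_of_notMem (by
        intro hm
        simp only [Finset.mem_singleton, Prod.mk.injEq] at hm
        exact hYne' hm.1),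
      Finset.card_singleton]
  have hsum := Finset.card_eq_sum_card_image f P
  have hconst : ∑ b ∈ P.image f, (P.filter (fun a => f a = b)).card =
      ∑ _b ∈ P.image f, 4 := by
    apply Finset.sum_congr rfl
    intro b hb
    obtain ⟨p, hp, rfl⟩ := Finset.mem_image.1 hb
    exact fiber4 p hp
  rw [hconst, Finset.sum_const, smul_eq_mul] at hsum
  have hPcard : P.card = (4 * A.card - 6) * (4 * Aᶜ.card - 6) := by
    rw [hP, Finset.card_product, T.card_ntR hA h2, T.card_ntR (T.compl_mem A hA) h2c]
  have hSF : SFinD T A = P.image f := rfl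
  have e1 : 4 * A.card - 6 = 2 * (2 * A.card - 3) := by omega
  have e2 : 4 * Aᶜ.card - 6 = 2 * (2 * Aᶜ.card - 3) := by omega
  have : (P.image f).card * 4 = ((2 * A.card - 3) * (2 * Aᶜ.card - 3)) * 4 := by
    rw [← hsum, hPcard, e1, e2]
    ring
  rw [hSF]
  exact Nat.eq_of_mul_eq_mul_right (by norm_num) this

theorem sides_mem_SFinD : T.sides ∈ SFinD T A :=
  (T.mem_SFinD hA h2 h2c).2 ⟨T, rfl, hA, rfl, rfl⟩

theorem moveF_card : (moveF T A).card = (2 * A.card - 3) * (2 * Aᶜ.card - 3) - 1 := by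
  classical
  have hinj : Set.InjOn (fun s => ((Sym2.mk A Aᶜ, treeOf T s) : Move n))
      ((SFinD T A).erase T.sides) := by
    intro s₁ h₁ s₂ h₂ he
    have hex₁ : ∃ T' : PhyloTree n, T'.sides = s₁ := by
      obtain ⟨T', hT', -⟩ := (T.mem_SFinD hA h2 h2c).1 (Finset.mem_of_mem_erase h₁)
      exact ⟨T', hT'⟩
    have hex₂ : ∃ T' : PhyloTree n, T'.sides = s₂ := by
      obtain ⟨T', hT', -⟩ := (T.mem_SFinD hA h2 h2c).1 (Finset.mem_of_mem_erase h₂)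
      exact ⟨T', hT'⟩
    have : treeOf T s₁ = treeOf T s₂ := congrArg Prod.snd he
    rw [← treeOf_sides T hex₁, ← treeOf_sides T hex₂, this]
  rw [moveF, Finset.card_image_of_injOn hinj,
    Finset.card_erase_of_mem (T.sides_mem_SFinD hA h2 h2c),
    T.card_SFinD hA h2 h2c]

theorem moveF_set :
    {θ ∈ T.OTBR | θ.1 = Sym2.mk A Aᶜ} = ↑(moveF T A) := by
  classical
  ext θ
  simp only [Set.mem_setOf_eq, Finset.coe_image, Set.mem_image, Finset.mem_coe,
    moveF]
  constructor
  · rintro ⟨⟨hneT, A', hmk, hA'T, hA'O, hr1, hr2⟩, hfst⟩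
    -- identify A' with A or Aᶜ
    have hkey : A ∈ θ.2.sides ∧ T.restrict A = θ.2.restrict A ∧
        T.restrict Aᶜ = θ.2.restrict Aᶜ := by
      rw [hfst] at hmk
      rcases Sym2.eq_iff.1 hmk with ⟨h1, -⟩|⟨h1, h2'⟩
      · subst h1
        exact ⟨hA'O, hr1, hr2⟩
      · -- A = A'ᶜ, Aᶜ = A'
        have hcm := θ.2.compl_mem A' hA'O
        refine ⟨by rw [h1]; exact hcm, ?_, ?_⟩
        · rw [h1]
          exact hr2
        · rw [h2']
          exact hr1
    obtain ⟨hAO, hrA, hrAc⟩ := hkey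
    have hsmem : θ.2.sides ∈ SFinD T A :=
      (T.mem_SFinD hA h2 h2c).2 ⟨θ.2, rfl, hAO, hrA.symm, hrAc.symm⟩
    have hsne : θ.2.sides ≠ T.sides := fun he => hneT (ext' he)
    refine ⟨θ.2.sides, Finset.mem_erase.2 ⟨hsne, hsmem⟩, ?_⟩
    have hts : (treeOf T θ.2.sides) = θ.2 := ext' (treeOf_sides T ⟨θ.2, rfl⟩)
    rw [hts, ← hfst]
  · rintro ⟨s, hs, rfl⟩
    obtain ⟨hsne, hsmem⟩ := Finset.mem_erase.1 hs
    obtain ⟨T', hT's, hA', hr1, hr2⟩ := (T.mem_SFinD hA h2 h2c).1 hsmem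
    have hts : (treeOf T s).sides = s := treeOf_sides T ⟨T', hT's⟩
    have hre : T'.sides = (treeOf T s).sides := by rw [hT's, hts]
    refine ⟨⟨?_, A, rfl, hA, ?_, ?_, ?_⟩, rfl⟩
    · intro he
      apply hsne
      have he' : treeOf T s = T := he
      rw [← hts, he']
    · rw [hts, ← hT's]
      exact hA'
    · rw [← restrict_congr hre A, hr1]
    · rw [← restrict_congr hre Aᶜ, hr2]

end Count

end PhyloTree

/-- the number of TBR operations on `T ∈ 𝒯_n` (`n ≥ 4`)
inducing a given non-trivial split `A|B` is `(2|A|−3)(2|B|−3) − 1`;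
consequently the number of TBR operations inducing non-trivial splits
is the sum of `(2|A|−3)(2|B|−3) − 1` over all non-trivial splits `A|B`
(each such split is recorded twice among the sides, whence the exact
division by two). -/

theorem otbr_nontrivial_split_count (n : ℕ) (hn : 4 ≤ n) (T : PhyloTree n) :
    (∀ A : Finset (Fin n), A ∈ T.sides → 2 ≤ A.card → 2 ≤ Aᶜ.card →
      {θ ∈ T.OTBR | θ.1 = Sym2.mk A Aᶜ}.ncard =
        (2 * A.card - 3) * (2 * Aᶜ.card - 3) - 1) ∧
    {θ ∈ T.OTBR | ∃ B : Finset (Fin n),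
        θ.1 = Sym2.mk B Bᶜ ∧ 2 ≤ B.card ∧ 2 ≤ Bᶜ.card}.ncard =
      (∑ B ∈ T.sides.filter (fun B => 2 ≤ B.card ∧ 2 ≤ Bᶜ.card),
        ((2 * B.card - 3) * (2 * Bᶜ.card - 3) - 1)) / 2 := by
  classical
  constructor
  · intro A hA h2 h2c
    rw [T.moveF_set hA h2 h2c, Set.ncard_coe_finset, T.moveF_card hA h2 h2c]
  · set f : Finset (Fin n) → ℕ :=
      fun B => (2 * B.card - 3) * (2 * Bᶜ.card - 3) - 1 with hf
    set Q := T.sides.filter (fun B => 2 ≤ B.card ∧ 2 ≤ Bᶜ.card) with hQ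
    set Q' := Q.filter
      (fun B => (toColex (B) : Colex (Finset (Fin n))) < toColex (Bᶜ)) with hQ'
    have hQmem : ∀ B ∈ Q, B ∈ T.sides ∧ 2 ≤ B.card ∧ 2 ≤ Bᶜ.card := by
      intro B hB
      have := Finset.mem_filter.1 hB
      exact ⟨this.1, this.2.1, this.2.2⟩
    have hQne : ∀ B ∈ Q, B ≠ Bᶜ := by
      intro B hB he
      obtain ⟨hBs, hB2, -⟩ := hQmem B hB
      obtain ⟨x, hx⟩ := Finset.card_pos.1 (by omega : 0 < B.card)
      exact Finset.mem_compl.1 (he ▸ hx) hx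
    have hQcompl : ∀ B ∈ Q, Bᶜ ∈ Q := by
      intro B hB
      obtain ⟨hBs, hB2, hB2c⟩ := hQmem B hB
      refine Finset.mem_filter.2 ⟨T.compl_mem B hBs, hB2c, ?_⟩
      rw [compl_compl]
      exact hB2
    -- the set as a finite union
    have hseteq : {θ ∈ T.OTBR | ∃ B : Finset (Fin n),
        θ.1 = Sym2.mk B Bᶜ ∧ 2 ≤ B.card ∧ 2 ≤ Bᶜ.card} =
        ↑(Q'.biUnion (fun B => PhyloTree.moveF T B)) := by
      ext θ
      simp only [Set.mem_setOf_eq, Finset.coe_biUnion, Set.mem_iUnion, Finset.mem_coe]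
      constructor
      · rintro ⟨hOT, B, hmk, hB2, hB2c⟩
        -- B is a side of T
        have hOTcopy := hOT
        obtain ⟨-, A', hmk', hA'T, -⟩ := hOTcopy
        have hBs : B ∈ T.sides := by
          rw [hmk] at hmk'
          rcases Sym2.eq_iff.1 hmk' with ⟨h1, -⟩|⟨h1, h2'⟩
          · rw [h1]; exact hA'T
          · rw [h1]
            exact T.compl_mem A' hA'T
        have hBQ : B ∈ Q := Finset.mem_filter.2 ⟨hBs, hB2, hB2c⟩
        have hcase : B ∈ Q' ∨ Bᶜ ∈ Q' := by
          have hne : (toColex (B) : Colex (Finset (Fin n))) ≠ toColex (Bᶜ) :=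
            fun he => hQne B hBQ (toColex_inj.1 he)
          rcases lt_or_gt_of_ne hne with h|h
          · exact Or.inl (Finset.mem_filter.2 ⟨hBQ, h⟩)
          · refine Or.inr (Finset.mem_filter.2 ⟨hQcompl B hBQ, ?_⟩)
            rw [compl_compl]
            exact h
        rcases hcase with hc|hc
        · obtain ⟨hBs', hB2', hB2c'⟩ := hQmem B (Finset.mem_filter.1 hc).1
          have hmem : θ ∈ {θ ∈ T.OTBR | θ.1 = Sym2.mk B Bᶜ} := ⟨hOT, hmk⟩
          rw [T.moveF_set hBs' hB2' hB2c'] at hmem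
          exact ⟨B, hc, hmem⟩
        · obtain ⟨hBs', hB2', hB2c'⟩ := hQmem Bᶜ (Finset.mem_filter.1 hc).1
          have hmk2 : θ.1 = Sym2.mk Bᶜ Bᶜᶜ := by
            rw [hmk, compl_compl]
            exact Sym2.eq_swap
          have hmem : θ ∈ {θ ∈ T.OTBR | θ.1 = Sym2.mk Bᶜ Bᶜᶜ} := ⟨hOT, hmk2⟩
          rw [T.moveF_set hBs' hB2' hB2c'] at hmem
          exact ⟨Bᶜ, hc, hmem⟩
      · rintro ⟨B, hBQ', hθ⟩
        obtain ⟨hBs, hB2, hB2c⟩ := hQmem B (Finset.mem_filter.1 hBQ').1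
        have : θ ∈ {θ ∈ T.OTBR | θ.1 = Sym2.mk B Bᶜ} := by
          rw [T.moveF_set hBs hB2 hB2c]
          exact hθ
        exact ⟨this.1, B, this.2, hB2, hB2c⟩
    rw [hseteq, Set.ncard_coe_finset]
    -- disjointness of the union
    have hdisj : ∀ B₁ ∈ Q', ∀ B₂ ∈ Q', B₁ ≠ B₂ →
        Disjoint (PhyloTree.moveF T B₁) (PhyloTree.moveF T B₂) := by
      intro B₁ h₁ B₂ h₂ hne
      refine Finset.disjoint_left.2 fun θ hm₁ hm₂ => ?_
      obtain ⟨s₁, -, rfl⟩ := Finset.mem_image.1 hm₁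
      obtain ⟨s₂, -, he⟩ := Finset.mem_image.1 hm₂
      have hfst : Sym2.mk B₂ B₂ᶜ = Sym2.mk B₁ B₁ᶜ := congrArg Prod.fst he
      rcases Sym2.eq_iff.1 hfst with ⟨h1, -⟩|⟨h1, h2'⟩
      · exact hne h1.symm
      · -- B₂ = B₁ᶜ
        have hlt₁ := (Finset.mem_filter.1 h₁).2
        have hlt₂ := (Finset.mem_filter.1 h₂).2
        have hlt₂' : (toColex (B₁ᶜ) : Colex (Finset (Fin n))) < toColex (B₁) := by
          rw [← h1, ← h2']
          exact hlt₂
        exact absurd hlt₂' (not_lt.2 (le_of_lt hlt₁))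
    rw [Finset.card_biUnion hdisj]
    have hcards : ∀ B ∈ Q', (PhyloTree.moveF T B).card = f B := by
      intro B hB
      obtain ⟨hBs, hB2, hB2c⟩ := hQmem B (Finset.mem_filter.1 hB).1
      rw [T.moveF_card hBs hB2 hB2c]
    rw [Finset.sum_congr rfl hcards]
    -- halving the full sum
    have hsplit := Finset.sum_filter_add_sum_filter_not Q
      (fun B => (toColex (B) : Colex (Finset (Fin n))) < toColex (Bᶜ)) f
    have hswap : ∑ B ∈ Q.filter (fun B =>
          ¬ (toColex (B) : Colex (Finset (Fin n))) < toColex (Bᶜ)), f B =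
        ∑ B ∈ Q', f B := by
      refine Finset.sum_nbij' (fun B => Bᶜ) (fun B => Bᶜ) ?_ ?_ ?_ ?_ ?_
      · intro B hB
        obtain ⟨hBQ, hnlt⟩ := Finset.mem_filter.1 hB
        refine Finset.mem_filter.2 ⟨hQcompl B hBQ, ?_⟩
        rw [compl_compl]
        have hne : (toColex (Bᶜ) : Colex (Finset (Fin n))) ≠ toColex (B) :=
          fun he => hQne B hBQ (toColex_inj.1 he).symm
        exact lt_of_le_of_ne (not_lt.1 hnlt) hne
      · intro B hB
        obtain ⟨hBQ, hlt⟩ := Finset.mem_filter.1 hB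
        refine Finset.mem_filter.2 ⟨hQcompl B hBQ, ?_⟩
        rw [compl_compl]
        exact not_lt.2 (le_of_lt hlt)
      · intro B hB
        exact compl_compl B
      · intro B hB
        exact compl_compl B
      · intro B hB
        show f B = f Bᶜ
        rw [hf]
        dsimp only
        rw [compl_compl, Nat.mul_comm (2 * Bᶜ.card - 3)]
    have e1 : Q.filter (fun B =>
        (toColex (B) : Colex (Finset (Fin n))) < toColex (Bᶜ)) = Q' := rfl
    rw [e1, hswap] at hsplit
    have egoal : (∑ B ∈ Q, f B) = (∑ B ∈ Q', f B) + (∑ B ∈ Q', f B) := hsplit.symm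
    rw [egoal]
    have e2 : (∑ B ∈ Q', f B) + (∑ B ∈ Q', f B) = 2 * (∑ B ∈ Q', f B) := by ring
    rw [e2, Nat.mul_div_cancel_left _ (by norm_num : 0 < 2)]
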